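/- arXiv:2411.13486 — 4 statements merged into one kernel-verified Lean document; each statement's English description precedes it below -/
import Mathlib

section
/- Let (X, μ) be a probability space, S an ergodic invertible measure-preserving transformation of (X, μ), and f : X → ℤ an integrable function with ∫ f dμ = 0. Then for μ-almost every x ∈ X there exist infinitely many positive integers n (i.e. a sequence n_k → ∞) such that ∑_{i=0}^{n-1} f(S^i x) = 0. -/
open MeasureTheory Filter

open Finset Function
open scoped ENNReal NNReal

set_option linter.unusedSectionVars false

namespace KA

variable {X : Type*} [MeasurableSpace X] {μ : Measure X} {S : X → X}

set_option linter.unusedSectionVars false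

lemma measurable_birkhoffSum (hSm : Measurable S) {g : X → ℝ} (hg : Measurable g) (n : ℕ) :
    Measurable (birkhoffSum S g n) :=
  Finset.measurable_sum _ fun i _ => hg.comp (hSm.iterate i)

lemma integrable_comp_iter (hS : MeasurePreserving S μ μ) {g : X → ℝ}
    (hgi : Integrable g μ) (n : ℕ) : Integrable (fun x => g (S^[n] x)) μ :=
  (MeasurePreserving.integrable_comp (hS.iterate n) hgi.aestronglyMeasurable).2 hgi

lemma integrable_birkhoffSum (hS : MeasurePreserving S μ μ) {g : X → ℝ}
    (hgi : Integrable g μ) (n : ℕ) : Integrable (birkhoffSum S g n) μ := by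
  have : birkhoffSum S g n = fun x => ∑ i ∈ Finset.range n, g (S^[i] x) := rfl
  rw [this]
  exact integrable_finset_sum _ fun i _ => integrable_comp_iter hS hgi i

lemma integral_comp_mp (hS : MeasurePreserving S μ μ) {g : X → ℝ}
    (hg : AEStronglyMeasurable g μ) : ∫ x, g (S x) ∂μ = ∫ x, g x ∂μ := by
  rw [← integral_map hS.measurable.aemeasurable (by rwa [hS.map_eq]), hS.map_eq]

/-- The Garsia maximal function `max_{0 ≤ k ≤ n} birkhoffSum S g k x`. -/
noncomputable def gar (S : X → X) (g : X → ℝ) : ℕ → X → ℝ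
  | 0 => fun _ => 0
  | (n+1) => fun x => max 0 (g x + gar S g n (S x))

variable {g : X → ℝ}

lemma gar_nonneg (n : ℕ) (x : X) : 0 ≤ gar S g n x := by
  cases n with
  | zero => exact le_refl 0
  | succ n => exact le_max_left _ _

lemma gar_mono (n : ℕ) : ∀ x, gar S g n x ≤ gar S g (n+1) x := by
  induction n with
  | zero => intro x; exact gar_nonneg 1 x
  | succ n ih =>
    intro x
    exact max_le_max le_rfl (add_le_add le_rfl (ih (S x)))

lemma measurable_gar (hSm : Measurable S) (hg : Measurable g) (n : ℕ) :
    Measurable (gar S g n) := by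
  induction n with
  | zero => exact measurable_const
  | succ n ih => exact measurable_const.max (hg.add (ih.comp hSm))

lemma integrable_gar (hS : MeasurePreserving S μ μ) (hgi : Integrable g μ) (n : ℕ) :
    Integrable (gar S g n) μ := by
  induction n with
  | zero => exact integrable_zero _ _ _
  | succ n ih =>
    have h1 : Integrable (fun x => gar S g n (S x)) μ :=
      (MeasurePreserving.integrable_comp hS ih.aestronglyMeasurable).2 ih
    have := (integrable_zero X ℝ μ).sup (hgi.add h1)
    exact this.congr (Eventually.of_forall fun x => rfl)

lemma birkhoffSum_le_gar {k n : ℕ} (hk : k ≤ n) (x : X) :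
    birkhoffSum S g k x ≤ gar S g n x := by
  induction n generalizing k x with
  | zero =>
    interval_cases k
    simp [birkhoffSum_zero, gar]
  | succ n ih =>
    cases k with
    | zero => simpa [birkhoffSum_zero] using gar_nonneg (n+1) x
    | succ k =>
      rw [birkhoffSum_succ']
      calc g x + birkhoffSum S g k (S x) ≤ g x + gar S g n (S x) := by
            exact add_le_add le_rfl (ih (Nat.succ_le_succ_iff.1 hk) (S x))
        _ ≤ gar S g (n+1) x := le_max_right _ _

lemma gar_achieved (n : ℕ) (x : X) : ∃ k ≤ n, gar S g n x = birkhoffSum S g k x := by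
  induction n generalizing x with
  | zero => exact ⟨0, le_rfl, (birkhoffSum_zero _ _ _).symm⟩
  | succ n ih =>
    rcases max_cases (0:ℝ) (g x + gar S g n (S x)) with ⟨h1, _⟩ | ⟨h1, _⟩
    · exact ⟨0, Nat.zero_le _, by simp [gar, h1, birkhoffSum_zero]⟩
    · rcases ih (S x) with ⟨k, hk, hke⟩
      refine ⟨k + 1, Nat.succ_le_succ hk, ?_⟩
      rw [birkhoffSum_succ']
      show max 0 (g x + gar S g n (S x)) = _
      rw [h1, hke]

lemma gar_pos_iff (n : ℕ) (x : X) :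
    0 < gar S g n x ↔ ∃ k, 0 < k ∧ k ≤ n ∧ 0 < birkhoffSum S g k x := by
  constructor
  · intro h
    rcases gar_achieved n x with ⟨k, hk, hke⟩
    refine ⟨k, ?_, hk, hke ▸ h⟩
    rcases Nat.eq_zero_or_pos k with rfl | hk0
    · rw [hke, birkhoffSum_zero] at h; exact absurd h (lt_irrefl 0)
    · exact hk0
  · rintro ⟨k, _, hkn, hks⟩
    exact lt_of_lt_of_le hks (birkhoffSum_le_gar hkn x)

end KA

namespace KA2
open KA

variable {X : Type*} [MeasurableSpace X] {μ : Measure X} {S : X → X} {g : X → ℝ}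

/-- **Maximal ergodic lemma** (Garsia's proof). -/
lemma maximal (hS : MeasurePreserving S μ μ) (hgm : Measurable g) (hgi : Integrable g μ) :
    0 ≤ ∫ x in {x | ∃ k, 0 < k ∧ 0 < birkhoffSum S g k x}, g x ∂μ := by
  set E : ℕ → Set X := fun n => {x | 0 < gar S g n x} with hE
  have hEmeas : ∀ n, MeasurableSet (E n) :=
    fun n => measurableSet_lt measurable_const (measurable_gar hS.measurable hgm n)
  have hEmono : Monotone E := by
    intro m n hmn x hx
    have : ∀ k, gar S g m x ≤ gar S g (m + k) x := by
      intro k; induction k with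
      | zero => exact le_rfl
      | succ k ih => exact le_trans ih (gar_mono (m + k) x)
    have h2 := this (n - m)
    rw [Nat.add_sub_cancel' hmn] at h2
    exact lt_of_lt_of_le hx h2
  -- the key estimate for each n
  have key : ∀ n, 0 ≤ ∫ x in E (n + 1), g x ∂μ := by
    intro n
    set h : X → ℝ := fun x => gar S g n x - gar S g n (S x) with hh
    have hgarI := integrable_gar hS hgi n
    have hgarSI : Integrable (fun x => gar S g n (S x)) μ :=
      (MeasurePreserving.integrable_comp hS hgarI.aestronglyMeasurable).2 hgarI
    have hInt : Integrable h μ := hgarI.sub hgarSI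
    have hint0 : ∫ x, h x ∂μ = 0 := by
      rw [integral_sub hgarI hgarSI, integral_comp_mp hS hgarI.aestronglyMeasurable, sub_self]
    -- on (E (n+1))ᶜ, h ≤ 0
    have hcompl : ∫ x in (E (n + 1))ᶜ, h x ∂μ ≤ 0 := by
      apply setIntegral_nonpos (hEmeas (n + 1)).compl
      intro x hx
      have h1 : gar S g (n + 1) x ≤ 0 := not_lt.1 hx
      have h2 : gar S g n x = 0 :=
        le_antisymm (le_trans (gar_mono n x) h1) (gar_nonneg n x)
      have := gar_nonneg (S := S) (g := g) n (S x)
      simp only [hh, h2, zero_sub, neg_nonpos]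
      exact this
    have hsplit := integral_add_compl (hEmeas (n + 1)) hInt
    have hEh : 0 ≤ ∫ x in E (n + 1), h x ∂μ := by
      have : ∫ x in E (n + 1), h x ∂μ = 0 - ∫ x in (E (n+1))ᶜ, h x ∂μ := by
        rw [← hint0, ← hsplit]; ring
      rw [this]; linarith
    refine le_trans hEh (setIntegral_mono_on hInt.integrableOn hgi.integrableOn
      (hEmeas (n + 1)) ?_)
    intro x hx
    have hx' : 0 < gar S g (n + 1) x := hx
    have heq : gar S g (n + 1) x = g x + gar S g n (S x) := by
      have : gar S g (n + 1) x = max 0 (g x + gar S g n (S x)) := rfl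
      rcases max_cases (0 : ℝ) (g x + gar S g n (S x)) with ⟨h1, _⟩ | ⟨h1, _⟩
      · rw [this, h1] at hx'; exact absurd hx' (lt_irrefl 0)
      · rw [this, h1]
    have := gar_mono (S := S) (g := g) n x
    simp only [hh]
    linarith
  -- pass to the limit
  have hunion : (⋃ n, E n) = {x | ∃ k, 0 < k ∧ 0 < birkhoffSum S g k x} := by
    ext x
    simp only [Set.mem_iUnion, Set.mem_setOf_eq, hE, gar_pos_iff]
    constructor
    · rintro ⟨n, k, hk0, _, hks⟩; exact ⟨k, hk0, hks⟩
    · rintro ⟨k, hk0, hks⟩; exact ⟨k, k, hk0, le_rfl, hks⟩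
  have htend := tendsto_setIntegral_of_monotone hEmeas hEmono
    (hgi.integrableOn : IntegrableOn g (⋃ n, E n) μ)
  rw [hunion] at htend
  refine ge_of_tendsto (htend.comp (tendsto_add_atTop_nat 1)) ?_
  exact Filter.Eventually.of_forall fun n => key n

end KA2

namespace KA3
open KA KA2

variable {X : Type*} [MeasurableSpace X] {μ : Measure X} {S : X → X} {g : X → ℝ}

lemma bdd_set_eq :
    {x : X | BddAbove (Set.range fun n => birkhoffSum S g n x)}
      = ⋃ C : ℕ, ⋂ n : ℕ, {x | birkhoffSum S g n x ≤ C} := by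
  ext x
  simp only [Set.mem_setOf_eq, Set.mem_iUnion, Set.mem_iInter]
  constructor
  · rintro ⟨C, hC⟩
    refine ⟨⌈C⌉₊, fun n => ?_⟩
    exact le_trans (hC (Set.mem_range_self n)) (Nat.le_ceil C)
  · rintro ⟨C, hC⟩
    exact ⟨C, by rintro y ⟨n, rfl⟩; exact hC n⟩

lemma bdd_set_invariant (x : X) :
    BddAbove (Set.range fun n => birkhoffSum S g n (S x))
      ↔ BddAbove (Set.range fun n => birkhoffSum S g n x) := by
  constructor
  · rintro ⟨C, hC⟩
    refine ⟨max 0 (g x + C), ?_⟩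
    rintro y ⟨n, rfl⟩
    cases n with
    | zero => simp [birkhoffSum_zero]
    | succ n =>
      show birkhoffSum S g (n + 1) x ≤ _
      rw [birkhoffSum_succ']
      exact le_max_of_le_right (add_le_add le_rfl (hC (Set.mem_range_self n)))
  · rintro ⟨C, hC⟩
    refine ⟨C - g x, ?_⟩
    rintro y ⟨n, rfl⟩
    have : g x + birkhoffSum S g n (S x) = birkhoffSum S g (n + 1) x :=
      (birkhoffSum_succ' S g n x).symm
    have h2 := hC (Set.mem_range_self (n + 1))
    simp only at h2 ⊢
    linarith [this ▸ h2]

/-- If `∫ g < 0` then a.e. the Birkhoff sums of `g` are bounded above. -/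
lemma ae_bddAbove (hS : Ergodic S μ) [IsProbabilityMeasure μ]
    (hgm : Measurable g) (hgi : Integrable g μ) (hneg : ∫ x, g x ∂μ < 0) :
    ∀ᵐ x ∂μ, BddAbove (Set.range fun n => birkhoffSum S g n x) := by
  set B : Set X := {x | BddAbove (Set.range fun n => birkhoffSum S g n x)} with hB
  have hBmeas : MeasurableSet B := by
    rw [hB, bdd_set_eq]
    exact MeasurableSet.iUnion fun C => MeasurableSet.iInter fun n =>
      measurableSet_le (measurable_birkhoffSum hS.toMeasurePreserving.measurable hgm n)
        measurable_const
  have hBinv : S ⁻¹' B = B := by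
    ext x
    exact bdd_set_invariant x
  rcases hS.measure_self_or_compl_eq_zero hBmeas hBinv with h0 | h0
  · -- μ B = 0 : contradiction with the maximal ergodic lemma
    exfalso
    set E : Set X := {x | ∃ k, 0 < k ∧ 0 < birkhoffSum S g k x} with hEd
    have hmax := maximal hS.toMeasurePreserving hgm hgi
    have hBcE : Bᶜ ⊆ E := by
      intro x hx
      by_contra hxe
      apply hx
      simp only [hEd, Set.mem_setOf_eq, not_exists, not_and, not_lt] at hxe
      refine ⟨0, ?_⟩
      rintro y ⟨n, rfl⟩
      cases n with
      | zero => simp [birkhoffSum_zero]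
      | succ n => exact hxe (n + 1) (Nat.succ_pos n)
    have hEfull : μ Eᶜ = 0 := by
      have : Eᶜ ⊆ B := by
        intro x hx
        by_contra hxb
        exact hx (hBcE hxb)
      exact measure_mono_null this h0
    have hEmeas : MeasurableSet E := by
      have : E = ⋃ k : ℕ, {x | 0 < k ∧ 0 < birkhoffSum S g k x} := by
        ext x; simp [hEd]
      rw [this]
      refine MeasurableSet.iUnion fun k => ?_
      rcases Nat.eq_zero_or_pos k with rfl | hk
      · simpa using MeasurableSet.empty
      · have : {x : X | 0 < k ∧ 0 < birkhoffSum S g k x}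
            = {x | 0 < birkhoffSum S g k x} := by
          ext x; simp [hk]
        rw [this]
        exact measurableSet_lt measurable_const
          (measurable_birkhoffSum hS.toMeasurePreserving.measurable hgm k)
    have : ∫ x in E, g x ∂μ = ∫ x, g x ∂μ := by
      rw [← integral_add_compl hEmeas hgi]
      have : ∫ x in Eᶜ, g x ∂μ = 0 := by
        rw [Measure.restrict_eq_zero.2 hEfull, integral_zero_measure]
      rw [this, add_zero]
    rw [this] at hmax
    linarith
  · exact (ae_iff (p := fun x => x ∈ B)).2 h0

end KA3

namespace KA4
open KA KA2 KA3
open scoped ENNReal NNReal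

variable {X : Type*} [MeasurableSpace X] {μ : Measure X} {S : X → X}

lemma birkhoffSum_sub_const (g : X → ℝ) (c : ℝ) (n : ℕ) (x : X) :
    birkhoffSum S (fun y => g y - c) n x = birkhoffSum S g n x - n * c := by
  simp only [birkhoffSum, Finset.sum_sub_distrib, Finset.sum_const, Finset.card_range,
    nsmul_eq_mul]

/-- A.e. linear bound on Birkhoff sums of a zero-mean function. -/
lemma ae_linear_bound (hS : Ergodic S μ) [IsProbabilityMeasure μ] {F : X → ℝ}
    (hFm : Measurable F) (hFi : Integrable F μ) (hF0 : ∫ x, F x ∂μ = 0)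
    {δ : ℝ} (hδ : 0 < δ) :
    ∀ᵐ x ∂μ, ∃ C : ℝ, ∀ n : ℕ, |birkhoffSum S F n x| ≤ δ * n + C := by
  have hint : ∀ (G : X → ℝ), Integrable G μ → ∫ x, G x ∂μ = 0 →
      ∫ x, (G x - δ) ∂μ < 0 := by
    intro G hGi hG0
    rw [integral_sub hGi (integrable_const δ), hG0, integral_const]
    simp [hδ]
  have h1 := ae_bddAbove hS (g := fun y => F y - δ) (hFm.sub measurable_const)
    (hFi.sub (integrable_const δ)) (hint F hFi hF0)
  have h2 := ae_bddAbove hS (g := fun y => -F y - δ) (hFm.neg.sub measurable_const)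
    (hFi.neg.sub (integrable_const δ)) (by
      refine hint _ hFi.neg ?_
      rw [integral_neg, hF0, neg_zero])
  filter_upwards [h1, h2] with x ⟨C₁, hC₁⟩ ⟨C₂, hC₂⟩
  refine ⟨max C₁ C₂, fun n => ?_⟩
  have e1 := hC₁ (Set.mem_range_self (f := fun n => birkhoffSum S (fun y => F y - δ) n x) n)
  have e2 := hC₂ (Set.mem_range_self (f := fun n => birkhoffSum S (fun y => -F y - δ) n x) n)
  rw [birkhoffSum_sub_const] at e1 e2
  have e3 : birkhoffSum S (fun y => -F y) n x = -birkhoffSum S F n x := by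
    simp [birkhoffSum, Finset.sum_neg_distrib]
  rw [e3] at e2
  have hn : (0:ℝ) ≤ n := Nat.cast_nonneg n
  rw [abs_le]
  constructor
  · nlinarith [le_max_right C₁ C₂]
  · nlinarith [le_max_left C₁ C₂]

/-- Positive measure of points visiting `A` with frequency `> μ A / 2` infinitely often. -/
lemma visits (hS : MeasurePreserving S μ μ) [IsProbabilityMeasure μ]
    {A : Set X} (hA : MeasurableSet A) (ha : μ A ≠ 0) :
    0 < μ {x | ∃ᶠ n in atTop,
      μ A / 2 * n < ∑ m ∈ Finset.range n, A.indicator 1 (S^[m] x)} := by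
  set V : ℕ → X → ℝ≥0∞ := fun n x => ∑ m ∈ Finset.range n, A.indicator 1 (S^[m] x) with hV
  set u : ℕ → X → ℝ≥0∞ := fun n x => V n x / n with hu
  have hVmeas : ∀ n, Measurable (V n) := fun n =>
    Finset.measurable_sum _ fun m _ =>
      ((measurable_one.indicator hA).comp (hS.measurable.iterate m))
  have humeas : ∀ n, Measurable (u n) := fun n => (hVmeas n).div measurable_const
  have hVle : ∀ n x, V n x ≤ n := by
    intro n x
    calc V n x ≤ ∑ _m ∈ Finset.range n, 1 := by
          refine Finset.sum_le_sum fun m _ => ?_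
          exact Set.indicator_le_self' (fun _ _ => zero_le_one) _
      _ = n := by simp
  have hule : ∀ n, u n ≤ᵐ[μ] fun _ => 1 := by
    intro n
    refine Filter.Eventually.of_forall fun x => ?_
    exact ENNReal.div_le_of_le_mul (by simpa using hVle n x)
  have hVint : ∀ n, ∫⁻ x, V n x ∂μ = n * μ A := by
    intro n
    have hstep : ∫⁻ x, V n x ∂μ = ∑ m ∈ Finset.range n, ∫⁻ x, A.indicator 1 (S^[m] x) ∂μ := by
      simp only [hV]
      exact lintegral_finset_sum _ fun m _ =>
        (measurable_one.indicator hA).comp (hS.measurable.iterate m)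
    rw [hstep]
    have : ∀ m, ∫⁻ x, A.indicator 1 (S^[m] x) ∂μ = μ A := by
      intro m
      rw [(hS.iterate m).lintegral_comp (measurable_one.indicator hA),
        lintegral_indicator_one hA]
    simp [this]
  have huint : ∀ n : ℕ, 0 < n → ∫⁻ x, u n x ∂μ = μ A := by
    intro n hn
    rw [hu]
    simp only [div_eq_mul_inv]
    rw [lintegral_mul_const _ (hVmeas n), hVint]
    rw [mul_comm (n : ℝ≥0∞) (μ A), mul_assoc, ENNReal.mul_inv_cancel
      (by exact_mod_cast hn.ne') (ENNReal.natCast_ne_top n), mul_one]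
  -- reverse Fatou
  have hrev := limsup_lintegral_le (μ := μ) (f := u) (fun _ => 1) humeas hule (by simp)
  have hls : limsup (fun n => ∫⁻ x, u n x ∂μ) atTop = μ A := by
    have : (fun n => ∫⁻ x, u n x ∂μ) =ᶠ[atTop] fun _ => μ A := by
      filter_upwards [eventually_gt_atTop 0] with n hn
      exact huint n hn
    rw [limsup_congr this, limsup_const]
  rw [hls] at hrev
  -- conclude positivity
  by_contra hcon
  push_neg at hcon
  have hzero : μ {x | ∃ᶠ n in atTop, μ A / 2 * n <
      ∑ m ∈ Finset.range n, A.indicator 1 (S^[m] x)} = 0 :=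
    le_antisymm hcon (by simp)
  have hae : ∀ᵐ x ∂μ, limsup (fun n => u n x) atTop ≤ μ A / 2 := by
    rw [← compl_mem_ae_iff] at hzero
    filter_upwards [hzero] with x hx
    simp only [Set.mem_compl_iff, Set.mem_setOf_eq, not_frequently, not_lt] at hx
    by_contra hlt
    push_neg at hlt
    have hfreq := frequently_lt_of_lt_limsup (by isBoundedDefault) hlt
    have : ∃ᶠ n in atTop, μ A / 2 * n < V n x := by
      refine (hfreq.and_eventually (eventually_gt_atTop 0)).mono ?_
      rintro n ⟨hn1, hn2⟩
      have hne : (n : ℝ≥0∞) ≠ 0 := by exact_mod_cast hn2.ne'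
      rw [hu] at hn1
      exact (ENNReal.lt_div_iff_mul_lt (Or.inl hne)
        (Or.inl (ENNReal.natCast_ne_top n))).1 hn1
    exact absurd this (by simpa [hV] using hx)
  have hfin : ∫⁻ x, limsup (fun n => u n x) atTop ∂μ ≤ μ A / 2 := by
    calc ∫⁻ x, limsup (fun n => u n x) atTop ∂μ
        ≤ ∫⁻ _x, μ A / 2 ∂μ := lintegral_mono_ae hae
      _ = μ A / 2 := by simp
  have : μ A ≤ μ A / 2 := le_trans hrev hfin
  have hhalf : μ A / 2 < μ A :=
    ENNReal.half_lt_self ha (ne_top_of_le_ne_top (measure_ne_top μ A) le_rfl)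
  exact absurd (lt_of_le_of_lt this hhalf) (lt_irrefl _)

end KA4

/-- **Krygin–Atkinson theorem.** If `S` is an ergodic invertible measure-preserving
transformation of a probability space `(X, μ)` and `f : X → ℤ` is integrable with
zero mean, then for almost every `x` the Birkhoff sums of `f` vanish for infinitely
many positive times. -/
theorem krygin_atkinson {X : Type*} [MeasurableSpace X] (μ : Measure X)
    [IsProbabilityMeasure μ] (S : X ≃ᵐ X) (hS : Ergodic (⇑S) μ)
    (f : X → ℤ) (hf : Measurable f)
    (hfi : Integrable (fun x => (f x : ℝ)) μ)
    (hf0 : ∫ x, (f x : ℝ) ∂μ = 0) :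
    ∀ᵐ x ∂μ, ∃ᶠ n in atTop,
      0 < n ∧ ∑ i ∈ Finset.range n, f ((⇑S)^[i] x) = 0 := by
  classical
  have hSm : Measurable (⇑S) := hS.toMeasurePreserving.measurable
  set F : X → ℝ := fun x => (f x : ℝ) with hFdef
  have hFm : Measurable F := measurable_from_top.comp hf
  set A : Set X := {x | ∀ n, 0 < n → birkhoffSum (⇑S) f n x ≠ 0} with hA
  have hfsum_meas : ∀ n, Measurable (birkhoffSum (⇑S) f n) := fun n =>
    Finset.measurable_sum _ fun i _ => hf.comp (hSm.iterate i)
  have hAmeas : MeasurableSet A := by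
    have : A = ⋂ n : ℕ, ⋂ (_ : 0 < n), (birkhoffSum (⇑S) f n ⁻¹' {0})ᶜ := by
      ext x; simp [hA]
    rw [this]
    exact MeasurableSet.iInter fun n => MeasurableSet.iInter fun _ =>
      ((hfsum_meas n) (measurableSet_singleton 0)).compl
  have hcast : ∀ n x, birkhoffSum (⇑S) F n x = ((birkhoffSum (⇑S) f n x : ℤ) : ℝ) := by
    intro n x
    unfold birkhoffSum
    push_cast
    rfl
  -- Step 1 : μ A = 0
  have hA0 : μ A = 0 := by
    by_contra ha
    have hvis := KA4.visits hS.toMeasurePreserving hAmeas ha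
    set r : ℝ := (μ A / 2).toReal with hr
    have haA : μ A ≠ ⊤ := measure_ne_top μ A
    have hrpos : 0 < r := ENNReal.toReal_pos
      (by simp [ENNReal.div_eq_top, ha, haA]) (by
        simp [ENNReal.div_eq_top])
    have hδ : (0:ℝ) < r / 4 := by positivity
    have hbd := KA4.ae_linear_bound (S := ⇑S) hS hFm hfi hf0 hδ
    -- pick a point in the positive-measure set where the a.e. bound also holds
    obtain ⟨x₀, hx₀vis, hx₀bd⟩ : ∃ x,
        (∃ᶠ n in atTop, μ A / 2 * n < ∑ m ∈ Finset.range n, A.indicator 1 ((⇑S)^[m] x))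
        ∧ ∃ C : ℝ, ∀ n : ℕ, |birkhoffSum (⇑S) F n x| ≤ r / 4 * n + C := by
      by_contra hcon
      push_neg at hcon
      have hsub : {x | ∃ᶠ n in atTop,
          μ A / 2 * n < ∑ m ∈ Finset.range n, A.indicator 1 ((⇑S)^[m] x)}
          ⊆ {x | ¬ ∃ C : ℝ, ∀ n : ℕ, |birkhoffSum (⇑S) F n x| ≤ r / 4 * n + C} := by
        intro x hx
        simp only [Set.mem_setOf_eq, not_exists, not_forall, not_le]
        exact fun C => hcon x hx C
      have := measure_mono_null hsub (ae_iff.1 hbd)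
      exact absurd this hvis.ne'
    obtain ⟨C, hC⟩ := hx₀bd
    have hC0 : 0 ≤ C := by
      have := hC 0
      simp [birkhoffSum_zero] at this
      linarith
    -- derive a bound `n < B` for all frequent times n
    have hkey : ∀ n : ℕ, (μ A / 2 * n < ∑ m ∈ Finset.range n, A.indicator 1 ((⇑S)^[m] x₀))
        → r * n < r / 2 * n + 2 * C + 3 := by
      intro n hn
      set T : Finset ℕ := (Finset.range n).filter (fun m => (⇑S)^[m] x₀ ∈ A) with hT
      -- indicator sum equals card T
      have hsum : (∑ m ∈ Finset.range n, A.indicator 1 ((⇑S)^[m] x₀)) = (T.card : ℝ≥0∞) := by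
        rw [hT, Finset.card_filter]
        push_cast
        refine Finset.sum_congr rfl fun m _ => ?_
        by_cases hm : (⇑S)^[m] x₀ ∈ A <;> simp [hm, Set.indicator_apply]
      rw [hsum] at hn
      -- to real
      have hreal : r * n < (T.card : ℝ) := by
        have h1 : (μ A / 2 * n) ≠ ⊤ :=
          ENNReal.mul_ne_top (by simp [ENNReal.div_eq_top]) (ENNReal.natCast_ne_top n)
        have := (ENNReal.toReal_lt_toReal h1 (ENNReal.natCast_ne_top T.card)).2 hn
        rwa [ENNReal.toReal_mul, ENNReal.toReal_natCast, ENNReal.toReal_natCast, ← hr] at this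
      -- injectivity of Birkhoff sums on T
      set φ : ℕ → ℤ := fun m => birkhoffSum (⇑S) f m x₀ with hφ
      have hne : ∀ m ∈ T, ∀ m' ∈ T, m < m' → φ m ≠ φ m' := by
        intro m hm m' hm' hlt he
        have hmA : (⇑S)^[m] x₀ ∈ A := (Finset.mem_filter.1 hm).2
        have hd : m' = m + (m' - m) := by omega
        have hd2 : m + (m' - m) - m = m' - m := by omega
        have : φ m' = φ m + birkhoffSum (⇑S) f (m' - m) ((⇑S)^[m] x₀) := by
          rw [hφ]; simp only; rw [hd, birkhoffSum_add, hd2]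
        have h0 : birkhoffSum (⇑S) f (m' - m) ((⇑S)^[m] x₀) = 0 := by
          rw [this] at he; linarith [he]
        exact hmA (m' - m) (by omega) h0
      have hinj : Set.InjOn φ T := by
        intro m hm m' hm' he
        rcases Nat.lt_trichotomy m m' with h | h | h
        · exact absurd he (hne m hm m' hm' h)
        · exact h
        · exact absurd he.symm (hne m' hm' m hm h)
      -- image bound
      set M : ℤ := ⌈r / 4 * n + C⌉ with hM
      have hMnn : (0:ℤ) ≤ M := by
        rw [hM]
        refine Int.ceil_nonneg ?_
        have : (0:ℝ) ≤ r/4 * n := by positivity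
        linarith
      have hmaps : ∀ m ∈ T, φ m ∈ Finset.Icc (-M) M := by
        intro m hm
        have hmn : m < n := Finset.mem_range.1 (Finset.mem_filter.1 hm).1
        have hb := hC m
        rw [hcast] at hb
        have hb2 : |(φ m : ℝ)| ≤ r / 4 * n + C := by
          refine le_trans hb ?_
          have : (m:ℝ) ≤ n := by exact_mod_cast hmn.le
          nlinarith
        have hb3 : |(φ m : ℝ)| ≤ (M:ℝ) := le_trans hb2 (Int.le_ceil _)
        have hb4 : |φ m| ≤ M := by exact_mod_cast hb3
        rw [Finset.mem_Icc]
        exact abs_le.1 hb4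
      have hcard : T.card ≤ (Finset.Icc (-M) M).card :=
        Finset.card_le_card_of_injOn φ hmaps hinj
      have hIcc : ((Finset.Icc (-M) M).card : ℝ) ≤ 2 * (M:ℝ) + 1 := by
        rw [Int.card_Icc]
        have h1 : (M + 1 - -M) = 2*M + 1 := by ring
        rw [h1]
        have h2 : ((2*M+1).toNat : ℤ) = 2*M+1 := Int.toNat_of_nonneg (by omega)
        have h3 : ((2*M+1).toNat : ℝ) = 2*(M:ℝ)+1 := by
          exact_mod_cast congrArg (fun z : ℤ => (z:ℝ)) h2
        rw [h3]
      have hM2 : (M : ℝ) ≤ r / 4 * n + C + 1 := le_of_lt (Int.ceil_lt_add_one _)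
      have : (T.card : ℝ) ≤ 2 * (r/4 * n + C + 1) + 1 := by
        calc (T.card : ℝ) ≤ ((Finset.Icc (-M) M).card : ℝ) := by exact_mod_cast hcard
          _ ≤ 2 * (M:ℝ) + 1 := hIcc
          _ ≤ 2 * (r/4 * n + C + 1) + 1 := by linarith
      calc r * n < (T.card : ℝ) := hreal
        _ ≤ 2 * (r/4 * n + C + 1) + 1 := this
        _ = r / 2 * n + 2 * C + 3 := by ring
    -- contradiction: n is bounded but frequent
    obtain ⟨n, hnN, hnprop⟩ := (frequently_atTop.1 hx₀vis) (⌈(4*C + 6)/r⌉₊ + 1)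
    have := hkey n hnprop
    have hn' : (⌈(4*C + 6)/r⌉₊ : ℝ) < n := by exact_mod_cast hnN
    have hle : (4*C + 6)/r ≤ (⌈(4*C + 6)/r⌉₊ : ℝ) := Nat.le_ceil _
    have : r / 2 * n < 2 * C + 3 := by linarith
    have : (n : ℝ) < (4*C + 6)/r := by
      rw [lt_div_iff₀ hrpos]
      nlinarith
    linarith
  -- Step 2 : bootstrap to infinitely many zeros
  have hiter : ∀ m : ℕ, μ ((⇑S)^[m] ⁻¹' A) = 0 := by
    intro m
    rw [(hS.toMeasurePreserving.iterate m).measure_preimage hAmeas.nullMeasurableSet]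
    exact hA0
  have hN : μ (⋃ m : ℕ, (⇑S)^[m] ⁻¹' A) = 0 := measure_iUnion_null hiter
  rw [← compl_mem_ae_iff] at hN
  filter_upwards [hN] with x hx
  simp only [Set.compl_iUnion, Set.mem_iInter, Set.mem_compl_iff, Set.mem_preimage] at hx
  have hG : ∀ m : ℕ, ∃ k, 0 < k ∧ birkhoffSum (⇑S) f k ((⇑S)^[m] x) = 0 := by
    intro m
    have := hx m
    rw [hA] at this
    simp only [Set.mem_setOf_eq, not_forall, not_not] at this
    obtain ⟨k, hk⟩ := this
    exact ⟨k, by tauto⟩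
  have hmain : ∀ N : ℕ, ∃ n, N < n ∧ birkhoffSum (⇑S) f n x = 0 := by
    intro N
    induction N with
    | zero =>
      obtain ⟨k, hk0, hke⟩ := hG 0
      exact ⟨k, hk0, by simpa using hke⟩
    | succ N ih =>
      obtain ⟨n, hn1, hn2⟩ := ih
      rcases lt_or_ge (N+1) n with h | h
      · exact ⟨n, h, hn2⟩
      · have hn : n = N + 1 := by omega
        obtain ⟨k, hk0, hke⟩ := hG n
        refine ⟨n + k, by omega, ?_⟩
        rw [birkhoffSum_add, hn2, hke, add_zero]
  rw [frequently_atTop]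
  intro N
  obtain ⟨n, hn1, hn2⟩ := hmain N
  exact ⟨n, by omega, by omega, hn2⟩
end

section
/- Let (X, μ) be a probability space, S an ergodic invertible measure-preserving transformation of (X, μ), and f : X → ℤ an integrable function with ∫ f dμ = 0. Then the cylindrical cascade C : X × ℤ → X × ℤ defined by C(x, z) = (S x, z + f(x)), which preserves the (σ-finite) measure μ × # where # is counting measure on ℤ, is conservative: for every measurable set E ⊆ X × ℤ of positive μ × # measure, (μ × #)-almost every point of E returns to E under some positive iterate of C. -/
open MeasureTheory Filter

open Topology

set_option linter.unusedSectionVars false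
set_option linter.unnecessarySimpa false
set_option linter.unusedTactic false

section Maximal

variable {X : Type*} [MeasurableSpace X] {μ : Measure X}
  {T : X → X} {g : X → ℝ}

/-- `maxSum T g N x = max (0, S₁g x, ..., S_N g x)`. -/
noncomputable def maxSum (T : X → X) (g : X → ℝ) : ℕ → X → ℝ
  | 0 => fun _ => 0
  | (N + 1) => fun x => max (maxSum T g N x) (birkhoffSum T g (N + 1) x)

lemma maxSum_nonneg (T : X → X) (g : X → ℝ) (N : ℕ) (x : X) : 0 ≤ maxSum T g N x := by
  induction N with
  | zero => simp [maxSum]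
  | succ N ih => exact le_trans ih (le_max_left _ _)

lemma maxSum_mono (T : X → X) (g : X → ℝ) {M N : ℕ} (h : M ≤ N) (x : X) :
    maxSum T g M x ≤ maxSum T g N x := by
  induction N with
  | zero => simp_all
  | succ N ih =>
    rcases Nat.eq_or_lt_of_le h with rfl | h'
    · exact le_rfl
    · exact le_trans (ih (Nat.lt_succ_iff.mp h')) (le_max_left _ _)

lemma birkhoffSum_le_maxSum (T : X → X) (g : X → ℝ) {n N : ℕ} (h : n ≤ N) (x : X) :
    birkhoffSum T g n x ≤ maxSum T g N x := by
  induction N with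
  | zero => interval_cases n; simp [maxSum, birkhoffSum_zero]
  | succ N ih =>
    rcases Nat.eq_or_lt_of_le h with rfl | h'
    · exact le_max_right _ _
    · exact le_trans (ih (Nat.lt_succ_iff.mp h')) (le_max_left _ _)

lemma maxSum_pos_exists (T : X → X) (g : X → ℝ) {N : ℕ} {x : X}
    (h : 0 < maxSum T g N x) : ∃ n, 1 ≤ n ∧ n ≤ N ∧ 0 < birkhoffSum T g n x := by
  induction N with
  | zero => simp [maxSum] at h
  | succ N ih =>
    rw [maxSum] at h
    rcases max_cases (maxSum T g N x) (birkhoffSum T g (N + 1) x) with ⟨he, _⟩ | ⟨he, _⟩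
    · obtain ⟨n, h1, h2, h3⟩ := ih (he ▸ h)
      exact ⟨n, h1, Nat.le_succ_of_le h2, h3⟩
    · exact ⟨N + 1, Nat.succ_le_succ (Nat.zero_le _), le_rfl, he ▸ h⟩


lemma maxSum_measurable (hT : Measurable T) (hg : Measurable g) (N : ℕ) :
    Measurable (maxSum T g N) := by
  induction N with
  | zero => simpa [maxSum] using measurable_const
  | succ N ih =>
    exact ih.max (Finset.measurable_sum _ fun i _ => hg.comp (hT.iterate i))

lemma birkhoffSum_integrable [IsProbabilityMeasure μ] (hT : MeasurePreserving T μ μ)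
    (hg : Integrable g μ) (n : ℕ) : Integrable (birkhoffSum T g n) μ := by
  have : ∀ i : ℕ, Integrable (fun x => g (T^[i] x)) μ := fun i =>
    (MeasurePreserving.integrable_comp (hT.iterate i) hg.aestronglyMeasurable).mpr hg
  refine (integrable_finset_sum (Finset.range n) fun i _ => this i).congr (ae_of_all _ fun x => ?_)
  simp [birkhoffSum]

lemma maxSum_integrable [IsProbabilityMeasure μ] (hT : MeasurePreserving T μ μ)
    (hg : Integrable g μ) (N : ℕ) : Integrable (maxSum T g N) μ := by
  induction N with
  | zero => simpa [maxSum] using integrable_const (0 : ℝ)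
  | succ N ih => exact ih.sup (birkhoffSum_integrable hT hg (N + 1))

lemma maxSum_key (T : X → X) (g : X → ℝ) (N : ℕ) (x : X) :
    maxSum T g (N + 1) x ≤ max 0 (g x + maxSum T g N (T x)) := by
  induction N with
  | zero =>
    simp only [maxSum, birkhoffSum_one]
    exact max_le (le_max_left _ _) (le_max_of_le_right (by simp))
  | succ N ih =>
    show max (maxSum T g (N+1) x) (birkhoffSum T g (N+2) x) ≤ _
    refine max_le (le_trans ih ?_) ?_
    · exact max_le_max le_rfl (by gcongr; exact maxSum_mono T g (Nat.le_succ N) (T x))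
    · refine le_max_of_le_right ?_
      rw [birkhoffSum_succ' T g (N+1) x]
      gcongr
      exact birkhoffSum_le_maxSum T g le_rfl (T x)

/-- The maximal ergodic theorem (Garsia's proof). -/
lemma maximal_ergodic [IsProbabilityMeasure μ] (hT : MeasurePreserving T μ μ)
    (hTe : MeasurableEmbedding T) (hgm : Measurable g) (hgi : Integrable g μ) :
    0 ≤ ∫ x in {x | ∃ n, 1 ≤ n ∧ 0 < birkhoffSum T g n x}, g x ∂μ := by
  set A : ℕ → Set X := fun N => {x | 0 < maxSum T g (N + 1) x} with hA
  have hAm : ∀ N, MeasurableSet (A N) := fun N =>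
    measurableSet_lt measurable_const (maxSum_measurable hTe.measurable hgm (N + 1))
  have hAmono : Monotone A := fun M N h x hx =>
    lt_of_lt_of_le hx (maxSum_mono T g (Nat.succ_le_succ h) x)
  have hU : ⋃ N, A N = {x | ∃ n, 1 ≤ n ∧ 0 < birkhoffSum T g n x} := by
    ext x
    simp only [Set.mem_iUnion, Set.mem_setOf_eq, hA]
    constructor
    · rintro ⟨N, hN⟩
      obtain ⟨n, h1, _, h3⟩ := maxSum_pos_exists T g hN
      exact ⟨n, h1, h3⟩
    · rintro ⟨n, h1, h2⟩
      exact ⟨n, lt_of_lt_of_le h2 (birkhoffSum_le_maxSum T g (Nat.le_succ n) x)⟩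
  -- each ∫_{A N} g ≥ 0
  have key : ∀ N, 0 ≤ ∫ x in A N, g x ∂μ := by
    intro N
    set Φ : X → ℝ := maxSum T g (N + 1) with hΦ
    set φ : X → ℝ := fun x => Φ x - Φ (T x) with hφ
    have hΦi : Integrable Φ μ := maxSum_integrable hT hgi (N + 1)
    have hΦTi : Integrable (fun x => Φ (T x)) μ :=
      (MeasurePreserving.integrable_comp hT hΦi.aestronglyMeasurable).mpr hΦi
    have hφi : Integrable φ μ := hΦi.sub hΦTi
    have hint : ∫ x, φ x ∂μ = 0 := by
      have := MeasurePreserving.integral_comp hT hTe Φ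
      rw [hφ]
      rw [integral_sub hΦi hΦTi, this, sub_self]
    have h1 : ∀ x ∈ A N, φ x ≤ g x := by
      intro x hx
      have h2 := maxSum_key T g N x
      have h3 : Φ x ≤ g x + maxSum T g N (T x) := by
        rcases le_or_gt (g x + maxSum T g N (T x)) 0 with h | h
        · exact absurd (lt_of_lt_of_le hx (le_trans h2 (max_le le_rfl h))) (lt_irrefl 0)
        · exact le_trans h2 (max_le h.le le_rfl)
      have h4 : maxSum T g N (T x) ≤ Φ (T x) := maxSum_mono T g (Nat.le_succ N) (T x)
      simp only [hφ]
      linarith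
    have h2 : ∀ x ∈ (A N)ᶜ, φ x ≤ 0 := by
      intro x hx
      have hx0 : Φ x ≤ 0 := not_lt.mp hx
      have : 0 ≤ Φ (T x) := maxSum_nonneg T g (N + 1) (T x)
      simp only [hφ]
      linarith
    have hsplit : ∫ x in A N, φ x ∂μ + ∫ x in (A N)ᶜ, φ x ∂μ = 0 := by
      rw [integral_add_compl (hAm N) hφi, hint]
    have hcneg : ∫ x in (A N)ᶜ, φ x ∂μ ≤ 0 :=
      setIntegral_nonpos (hAm N).compl h2
    have hApos : 0 ≤ ∫ x in A N, φ x ∂μ := by linarith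
    calc (0:ℝ) ≤ ∫ x in A N, φ x ∂μ := hApos
      _ ≤ ∫ x in A N, g x ∂μ :=
        setIntegral_mono_on (hφi.integrableOn) (hgi.integrableOn) (hAm N) h1
  -- pass to the limit
  have := tendsto_setIntegral_of_monotone hAm hAmono (f := g) (by rw [hU]; exact hgi.integrableOn)
  rw [hU] at this
  exact ge_of_tendsto' this key
end Maximal
section Helpers

/-- The "limsup aₙ/n ≥ 0" property, ε-version vs 1/(k+1)-version. -/
lemma P_iff_k (a : ℕ → ℝ) :
    (∀ k : ℕ, ∀ N : ℕ, ∃ n, N ≤ n ∧ -((n : ℝ) / (k + 1)) < a n) ↔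
    (∀ ε : ℝ, 0 < ε → ∀ N : ℕ, ∃ n, N ≤ n ∧ -(ε * n) < a n) := by
  constructor
  · intro h ε hε N
    obtain ⟨k, hk⟩ := exists_nat_one_div_lt hε
    obtain ⟨n, hn1, hn2⟩ := h k N
    refine ⟨n, hn1, lt_of_le_of_lt ?_ hn2⟩
    rw [neg_le_neg_iff]
    rw [div_eq_inv_mul, ← one_div]
    have h1 : (1 : ℝ) / (k + 1) ≤ ε := hk.le
    have h2 : (0 : ℝ) ≤ n := Nat.cast_nonneg n
    nlinarith
  · intro h k N
    obtain ⟨n, hn1, hn2⟩ := h (1 / ((k : ℝ) + 1)) (by positivity) N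
    refine ⟨n, hn1, lt_of_le_of_lt (le_of_eq ?_) hn2⟩
    ring

lemma P_shift (b : ℝ) (a : ℕ → ℝ)
    (h : ∀ ε : ℝ, 0 < ε → ∀ N : ℕ, ∃ n, N ≤ n ∧ -(ε * n) < a n) :
    ∀ ε : ℝ, 0 < ε → ∀ N : ℕ, ∃ n, N ≤ n ∧ -(ε * n) < a (n + 1) - b := by
  intro ε hε N
  obtain ⟨M, hM⟩ := exists_nat_ge ((|b| + ε) / (ε / 2))
  obtain ⟨m, hm1, hm2⟩ := h (ε / 2) (by positivity) (max (N + 1) M)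
  have hmN : N + 1 ≤ m := le_trans (le_max_left _ _) hm1
  have hmM : (M : ℝ) ≤ m := Nat.cast_le.mpr (le_trans (le_max_right _ _) hm1)
  have h2 : (|b| + ε) ≤ (ε / 2) * m := by
    rw [div_le_iff₀ (by positivity)] at hM
    calc (|b| + ε) ≤ (M : ℝ) * (ε / 2) := hM
      _ ≤ (m : ℝ) * (ε / 2) := by gcongr
      _ = (ε / 2) * m := mul_comm _ _
  obtain ⟨n, rfl⟩ : ∃ n, m = n + 1 := ⟨m - 1, (Nat.succ_pred_eq_of_pos (by omega)).symm⟩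
  refine ⟨n, by omega, ?_⟩
  have hb : b ≤ |b| := le_abs_self b
  push_cast at hm2 h2 ⊢
  nlinarith

lemma P_unshift (b : ℝ) (a : ℕ → ℝ)
    (h : ∀ ε : ℝ, 0 < ε → ∀ N : ℕ, ∃ n, N ≤ n ∧ -(ε * n) < a (n + 1) - b) :
    ∀ ε : ℝ, 0 < ε → ∀ N : ℕ, ∃ n, N ≤ n ∧ -(ε * n) < a n := by
  intro ε hε N
  obtain ⟨M, hM⟩ := exists_nat_ge (|b| / (ε / 2))
  obtain ⟨n, hn1, hn2⟩ := h (ε / 2) (by positivity) (max N M)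
  have hnN : N ≤ n := le_trans (le_max_left _ _) hn1
  have hnM : (M : ℝ) ≤ n := Nat.cast_le.mpr (le_trans (le_max_right _ _) hn1)
  refine ⟨n + 1, by omega, ?_⟩
  have hb : -|b| ≤ b := neg_abs_le b
  have h2 : |b| ≤ (ε / 2) * n := by
    rw [div_le_iff₀ (by positivity)] at hM
    calc |b| ≤ (M : ℝ) * (ε / 2) := hM
      _ ≤ (n : ℝ) * (ε / 2) := by gcongr
      _ = (ε / 2) * n := mul_comm _ _
  push_cast
  nlinarith

end Helpers
section E1

variable {X : Type*} [MeasurableSpace X] {μ : Measure X}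
  {T : X → X} {g : X → ℝ}

lemma eventually_birkhoffSum_le [IsProbabilityMeasure μ] (hS : Ergodic T μ)
    (hTe : MeasurableEmbedding T) (hgm : Measurable g) (hgi : Integrable g μ)
    {c : ℝ} (hc : ∫ x, g x ∂μ < c) :
    ∀ᵐ x ∂μ, ∀ᶠ n in atTop, birkhoffSum T g n x ≤ c * n := by
  set h : X → ℝ := fun x => g x - c with hh
  have hhm : Measurable h := hgm.sub measurable_const
  have hsum : ∀ (n : ℕ) (x : X), birkhoffSum T h n x = birkhoffSum T g n x - n * c := by
    intro n x
    simp [hh, birkhoffSum, Finset.sum_sub_distrib, mul_comm]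
  set D : Set X := ⋂ (k : ℕ), ⋂ (N : ℕ),
      ⋃ (n : ℕ), ⋃ (_ : N ≤ n), {x | -((n : ℝ) / (k + 1)) < birkhoffSum T h n x} with hD
  have hmem : ∀ x, x ∈ D ↔
      ∀ k : ℕ, ∀ N : ℕ, ∃ n, N ≤ n ∧ -((n : ℝ) / (k + 1)) < birkhoffSum T h n x := by
    intro x
    simp [hD, Set.mem_iInter, Set.mem_iUnion]
  have hmemP : ∀ x, x ∈ D ↔
      ∀ ε : ℝ, 0 < ε → ∀ N : ℕ, ∃ n, N ≤ n ∧ -(ε * n) < birkhoffSum T h n x := by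
    intro x; rw [hmem]; exact P_iff_k _
  have hDm : MeasurableSet D := by
    refine MeasurableSet.iInter fun k => MeasurableSet.iInter fun N =>
      MeasurableSet.iUnion fun n => MeasurableSet.iUnion fun _ => ?_
    exact measurableSet_lt measurable_const
      (Finset.measurable_sum _ fun i _ => hhm.comp (hTe.measurable.iterate i))
  have hinv : T ⁻¹' D = D := by
    ext x
    simp only [Set.mem_preimage]
    rw [hmemP, hmemP]
    have hshift : ∀ (n : ℕ),
        birkhoffSum T h n (T x) = birkhoffSum T h (n + 1) x - h x := by
      intro n; rw [birkhoffSum_succ' T h n x]; ring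
    constructor
    · intro hx
      have := P_unshift (h x) (fun n => birkhoffSum T h n x) ?_
      · exact this
      · intro ε hε N
        obtain ⟨n, hn1, hn2⟩ := hx ε hε N
        exact ⟨n, hn1, by rw [← hshift]; exact hn2⟩
    · intro hx
      intro ε hε N
      obtain ⟨n, hn1, hn2⟩ := P_shift (h x) (fun n => birkhoffSum T h n x) hx ε hε N
      exact ⟨n, hn1, by rw [hshift]; exact hn2⟩
  rcases hS.toPreErgodic.prob_eq_zero_or_one hDm hinv with h0 | h1
  · -- the failure set is contained in D
    rw [ae_iff]
    refine measure_mono_null ?_ h0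
    intro x hx
    simp only [Set.mem_setOf_eq, not_eventually] at hx
    rw [hmem x]
    intro k N
    rw [frequently_atTop] at hx
    obtain ⟨n, hn1, hn2⟩ := hx N
    rw [not_le] at hn2
    refine ⟨n, hn1, ?_⟩
    have : (0:ℝ) < birkhoffSum T h n x := by rw [hsum]; linarith [hn2]
    have h2 : -((n : ℝ) / (k + 1)) ≤ 0 := by
      rw [neg_nonpos]; positivity
    linarith
  · -- measure D = 1 leads to a contradiction with the maximal ergodic theorem
    exfalso
    set ε : ℝ := (c - ∫ x, g x ∂μ) / 2 with hε
    have hεpos : 0 < ε := by rw [hε]; linarith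
    set h' : X → ℝ := fun x => g x - (∫ x, g x ∂μ + ε) with hh'
    have hh'm : Measurable h' := hgm.sub measurable_const
    have hh'i : Integrable h' μ := hgi.sub (integrable_const _)
    have hsub : D ⊆ {x | ∃ n, 1 ≤ n ∧ 0 < birkhoffSum T h' n x} := by
      intro x hx
      rw [hmemP] at hx
      obtain ⟨n, hn1, hn2⟩ := hx (ε / 2) (by positivity) 1
      refine ⟨n, hn1, ?_⟩
      have hsum' : birkhoffSum T h' n x = birkhoffSum T g n x - n * (∫ x, g x ∂μ + ε) := by
        simp only [hh', birkhoffSum, Finset.sum_sub_distrib, Finset.sum_const,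
          Finset.card_range, nsmul_eq_mul]
      have hce : c = (∫ x, g x ∂μ) + 2 * ε := by rw [hε]; ring
      have hn1' : (1:ℝ) ≤ n := by exact_mod_cast hn1
      have hs := hsum n x
      nlinarith [hn2, hs, hsum']
    have hmax := maximal_ergodic hS.toMeasurePreserving hTe hh'm hh'i
    have hcompl : μ {x | ∃ n, 1 ≤ n ∧ 0 < birkhoffSum T h' n x}ᶜ = 0 := by
      refine measure_mono_null (Set.compl_subset_compl.mpr hsub) ?_
      rw [measure_compl hDm (measure_ne_top _ _), h1, measure_univ, tsub_self]
    rw [Measure.restrict_eq_self_of_ae_mem (ae_iff.mpr hcompl)] at hmax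
    have hint : ∫ x, h' x ∂μ = -ε := by
      rw [hh']
      rw [integral_sub hgi (integrable_const _), integral_const]
      simp [measure_univ]
    rw [hint] at hmax
    linarith

lemma birkhoff_tendsto [IsProbabilityMeasure μ] (hS : Ergodic T μ)
    (hTe : MeasurableEmbedding T) (hgm : Measurable g) (hgi : Integrable g μ) :
    ∀ᵐ x ∂μ, Tendsto (fun n => birkhoffSum T g n x / n) atTop (𝓝 (∫ x, g x ∂μ)) := by
  have hneg : ∀ (n : ℕ) (x : X), birkhoffSum T (fun y => -g y) n x = -birkhoffSum T g n x := by
    intro n x; simp [birkhoffSum]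
  have hup : ∀ k : ℕ, ∀ᵐ x ∂μ, ∀ᶠ n in atTop,
      birkhoffSum T g n x ≤ (∫ x, g x ∂μ + 1 / (k + 1)) * n := by
    intro k
    refine eventually_birkhoffSum_le hS hTe hgm hgi ?_
    have : (0:ℝ) < 1 / (k + 1) := by positivity
    linarith
  have hlo : ∀ k : ℕ, ∀ᵐ x ∂μ, ∀ᶠ n in atTop,
      -birkhoffSum T g n x ≤ (-(∫ x, g x ∂μ) + 1 / (k + 1)) * n := by
    intro k
    have h0 : (0:ℝ) < 1 / (k + 1) := by positivity
    have := eventually_birkhoffSum_le (g := fun y => -g y) hS hTe hgm.neg hgi.neg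
      (c := -(∫ x, g x ∂μ) + 1 / ((k:ℝ) + 1)) (by rw [integral_neg]; linarith)
    filter_upwards [this] with x hx
    filter_upwards [hx] with n hn
    rw [← hneg n x]; exact hn
  filter_upwards [ae_all_iff.mpr hup, ae_all_iff.mpr hlo] with x hupx hlox
  rw [Metric.tendsto_atTop]
  intro ε hε
  obtain ⟨k, hk⟩ := exists_nat_one_div_lt hε
  have hev := ((hupx k).and (hlox k)).and (eventually_ge_atTop 1)
  rw [eventually_atTop] at hev
  obtain ⟨N, hN⟩ := hev
  refine ⟨N, fun n hn => ?_⟩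
  obtain ⟨⟨h1, h2⟩, h3⟩ := hN n hn
  have hn0 : (0:ℝ) < n := by exact_mod_cast Nat.lt_of_lt_of_le Nat.zero_lt_one h3
  rw [Real.dist_eq]
  have key : |birkhoffSum T g n x / n - ∫ x, g x ∂μ| ≤ 1 / ((k:ℝ) + 1) := by
    have hrw : birkhoffSum T g n x / n - ∫ x, g x ∂μ
        = (birkhoffSum T g n x - (∫ x, g x ∂μ) * n) / n := by field_simp
    rw [hrw, abs_div, abs_of_pos hn0, div_le_iff₀ hn0, abs_le]
    constructor <;> nlinarith [h1, h2]
  exact lt_of_le_of_lt key hk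
end E1

section Atkinson

variable {X : Type*} [MeasurableSpace X] {μ : Measure X} [IsProbabilityMeasure μ]

/-- Integer version of Atkinson's theorem: the Birkhoff sums of an integrable zero-mean
integer cocycle over an ergodic transformation return to `0` along returns to any set. -/
lemma atkinson_int (S : X ≃ᵐ X) (hS : Ergodic (⇑S) μ) (f : X → ℤ) (hf : Measurable f)
    (hfi : Integrable (fun x => (f x : ℝ)) μ) (hf0 : ∫ x, (f x : ℝ) ∂μ = 0)
    {A : Set X} (hA : MeasurableSet A) :
    ∀ᵐ x ∂μ, x ∈ A → ∃ n, 0 < n ∧ S^[n] x ∈ A ∧ birkhoffSum (⇑S) f n x = 0 := by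
  classical
  set B : Set X :=
    {x | x ∈ A ∧ ∀ n, 0 < n → S^[n] x ∈ A → birkhoffSum (⇑S) f n x ≠ 0} with hB
  have hbsm : ∀ n : ℕ, Measurable (birkhoffSum (⇑S) f n) := fun n =>
    Finset.measurable_sum _ fun i _ => hf.comp (S.measurable.iterate i)
  have hBm : MeasurableSet B := by
    have : B = A ∩ ⋂ (n : ℕ), ⋂ (_ : 0 < n),
        ((S^[n]) ⁻¹' A)ᶜ ∪ (birkhoffSum (⇑S) f n ⁻¹' {0})ᶜ := by
      ext x
      simp only [hB, Set.mem_setOf_eq, Set.mem_inter_iff, Set.mem_iInter, Set.mem_union,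
        Set.mem_compl_iff, Set.mem_preimage, Set.mem_singleton_iff]
      constructor
      · rintro ⟨h1, h2⟩
        exact ⟨h1, fun n hn => by rcases imp_iff_not_or.mp (h2 n hn) with h | h <;> tauto⟩
      · rintro ⟨h1, h2⟩
        exact ⟨h1, fun n hn hmem => by rcases h2 n hn with h | h <;> tauto⟩
    rw [this]
    refine hA.inter (MeasurableSet.iInter fun n => MeasurableSet.iInter fun hn => ?_)
    exact ((S.measurable.iterate n) hA).compl.union ((hbsm n (measurableSet_singleton 0)).compl)
  -- it suffices to prove that `B` is null
  suffices hB0 : μ B = 0 by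
    rw [ae_iff]
    refine measure_mono_null ?_ hB0
    intro x hx
    simp only [Set.mem_setOf_eq, not_forall, not_exists] at hx
    obtain ⟨hxA, hx2⟩ := hx
    refine ⟨hxA, fun n hn hmem heq => ?_⟩
    exact (hx2 n) ⟨hn, hmem, heq⟩
  by_contra hBne
  -- Birkhoff a.e. convergence for `f` and for the indicator of `B`
  set c : ℝ := (μ B).toReal with hc
  have hcpos : 0 < c := ENNReal.toReal_pos hBne (measure_ne_top μ B)
  have hcastm : Measurable (Int.cast : ℤ → ℝ) := fun _ _ => trivial
  have hfm : Measurable (fun x => (f x : ℝ)) := hcastm.comp hf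
  have hbf := birkhoff_tendsto hS S.measurableEmbedding hfm hfi
  rw [hf0] at hbf
  have hIm : Measurable (B.indicator (1 : X → ℝ)) := measurable_one.indicator hBm
  have hIi : Integrable (B.indicator (1 : X → ℝ)) μ := (integrable_const 1).indicator hBm
  have hbB := birkhoff_tendsto hS S.measurableEmbedding hIm hIi
  rw [integral_indicator_one hBm, measureReal_def, ← hc] at hbB
  have : (ae μ).NeBot := ae_neBot.mpr (IsProbabilityMeasure.ne_zero μ)
  obtain ⟨x, hx1, hx2⟩ := (hbf.and hbB).exists
  -- notation
  set a : ℕ → ℝ := fun i => ((birkhoffSum (⇑S) f i x : ℤ) : ℝ) with ha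
  set v : ℕ → ℝ := fun N => birkhoffSum (⇑S) (B.indicator (1 : X → ℝ)) N x with hv
  have hacast : ∀ i : ℕ, birkhoffSum (⇑S) (fun y => (f y : ℝ)) i x = a i := by
    intro i; simp [ha, birkhoffSum]
  -- eventual bounds from the two Birkhoff limits
  have hev1 : ∃ M : ℕ, 1 ≤ M ∧ ∀ n : ℕ, M ≤ n → |a n| ≤ c / 8 * n := by
    rw [Metric.tendsto_atTop] at hx1
    obtain ⟨M0, hM0⟩ := hx1 (c / 8) (by positivity)
    refine ⟨max M0 1, le_max_right _ _, fun n hn => ?_⟩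
    have h1 : M0 ≤ n := le_trans (le_max_left _ _) hn
    have h2 : (1:ℝ) ≤ n := by exact_mod_cast le_trans (le_max_right _ _) hn
    have := hM0 n h1
    rw [Real.dist_eq, sub_zero, hacast] at this
    rw [abs_div] at this
    rw [div_lt_iff₀ (by positivity : (0:ℝ) < |(n:ℝ)|)] at this
    calc |a n| ≤ c / 8 * |(n:ℝ)| := this.le
      _ = c / 8 * n := by rw [abs_of_pos (by linarith)]
  obtain ⟨M, hM1, hMb⟩ := hev1
  set K : ℝ := ∑ i ∈ Finset.range M, |a i| with hK
  have hKb : ∀ i, i < M → |a i| ≤ K :=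
    fun i hi => Finset.single_le_sum (fun j _ => abs_nonneg (a j))
      (Finset.mem_range.mpr hi)
  have hev2 : ∃ M2 : ℕ, ∀ N : ℕ, M2 ≤ N → 1 ≤ N → c / 2 * N ≤ v N := by
    rw [Metric.tendsto_atTop] at hx2
    obtain ⟨M2, hM2⟩ := hx2 (c / 2) (by positivity)
    refine ⟨M2, fun N hN hN1 => ?_⟩
    have hN0 : (0:ℝ) < N := by exact_mod_cast hN1
    have := hM2 N hN
    rw [Real.dist_eq] at this
    have h3 : c / 2 < v N / N := by
      have := abs_lt.mp this
      linarith [this.1]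
    calc c / 2 * N ≤ (v N / N) * N := by nlinarith
      _ = v N := by field_simp
  obtain ⟨M2, hM2b⟩ := hev2
  -- the combinatorial claim
  have claim : ∀ N : ℕ, 1 ≤ N → ∃ i, i < N ∧ v N - 1 ≤ 2 * |a i| := by
    intro N hN
    set V : Finset ℕ := (Finset.range N).filter (fun i => S^[i] x ∈ B) with hV
    have hvV : v N = (V.card : ℝ) := by
      simp only [hv, birkhoffSum, Set.indicator_apply, Pi.one_apply]
      rw [Finset.sum_boole]
    rcases V.eq_empty_or_nonempty with hVe | hVne
    · refine ⟨0, hN, ?_⟩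
      rw [hvV, hVe]
      simp only [Finset.card_empty, Nat.cast_zero]
      have := abs_nonneg (a 0)
      linarith
    · have key : ∀ i ∈ V, ∀ j ∈ V, i < j →
          birkhoffSum (⇑S) f i x ≠ birkhoffSum (⇑S) f j x := by
        intro i hi j hj hij
        have hiB : S^[i] x ∈ B := (Finset.mem_filter.mp hi).2
        have hjB : S^[j] x ∈ B := (Finset.mem_filter.mp hj).2
        have hadd : birkhoffSum (⇑S) f j x
            = birkhoffSum (⇑S) f i x + birkhoffSum (⇑S) f (j - i) (S^[i] x) := by
          have := birkhoffSum_add (⇑S) f i (j - i) x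
          rwa [Nat.add_sub_cancel' hij.le] at this
        have hiter : S^[j - i] (S^[i] x) = S^[j] x := by
          rw [← Function.iterate_add_apply, Nat.sub_add_cancel hij.le]
        have hne := hiB.2 (j - i) (by omega) (by rw [hiter]; exact hjB.1)
        intro heq
        apply hne
        linarith [hadd, heq]
      have hinj : Set.InjOn (fun i => birkhoffSum (⇑S) f i x) ↑V := by
        intro i hi j hj heq
        by_contra hne
        rcases lt_or_gt_of_ne hne with h | h
        · exact key i hi j hj h heq
        · exact key j hj i hi h heq.symm
      set W : Finset ℤ := V.image (fun i => birkhoffSum (⇑S) f i x) with hW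
      have hWcard : W.card = V.card := Finset.card_image_of_injOn hinj
      have hWne : W.Nonempty := hVne.image _
      set m₀ : ℤ := W.min' hWne with hm₀
      set m₁ : ℤ := W.max' hWne with hm₁
      obtain ⟨w0, hw0⟩ := Finset.Nonempty.exists_mem hWne
      have hm01 : m₀ ≤ m₁ := le_trans (W.min'_le w0 hw0) (W.le_max' w0 hw0)
      have hsub : W ⊆ Finset.Icc m₀ m₁ :=
        fun w hw => Finset.mem_Icc.mpr ⟨W.min'_le w hw, W.le_max' w hw⟩
      have hcard : (V.card : ℤ) ≤ m₁ - m₀ + 1 := by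
        have h1 : W.card ≤ (Finset.Icc m₀ m₁).card := Finset.card_le_card hsub
        rw [hWcard] at h1
        have h2 : ((Finset.Icc m₀ m₁).card : ℤ) = m₁ + 1 - m₀ := by
          rw [Int.card_Icc]
          exact Int.toNat_of_nonneg (by omega)
        have h3 : (V.card : ℤ) ≤ ((Finset.Icc m₀ m₁).card : ℤ) := by exact_mod_cast h1
        omega
      -- choose the element of `W` with the largest absolute value
      have hmain : ∃ w ∈ W, m₁ - m₀ ≤ 2 * |w| := by
        rcases le_total |m₀| |m₁| with h | h
        · exact ⟨m₁, W.max'_mem hWne, by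
            have h1 : m₁ - m₀ ≤ |m₁| + |m₀| := by
              have := le_abs_self m₁; have := neg_abs_le m₀; linarith
            linarith⟩
        · exact ⟨m₀, W.min'_mem hWne, by
            have h1 : m₁ - m₀ ≤ |m₁| + |m₀| := by
              have := le_abs_self m₁; have := neg_abs_le m₀; linarith
            linarith⟩
      obtain ⟨w, hwW, hwabs⟩ := hmain
      obtain ⟨i, hiV, hieq⟩ := Finset.mem_image.mp hwW
      refine ⟨i, Finset.mem_range.mp (Finset.mem_filter.mp hiV).1, ?_⟩
      have hfin : (V.card : ℤ) - 1 ≤ 2 * |birkhoffSum (⇑S) f i x| := by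
        rw [hieq]; omega
      rw [hvV]
      show (V.card : ℝ) - 1 ≤ 2 * |((birkhoffSum (⇑S) f i x : ℤ) : ℝ)|
      exact_mod_cast hfin
  -- choose a large `N` and derive a contradiction
  obtain ⟨N4, hN4⟩ := exists_nat_gt (max ((4 * K + 2) / c) (4 / c))
  set N : ℕ := max M2 (max 1 N4) with hN
  have hNM2 : M2 ≤ N := le_max_left _ _
  have hN1 : 1 ≤ N := le_trans (le_max_left _ _) (le_max_right _ _)
  have hNN4 : (N4 : ℝ) ≤ N := Nat.cast_le.mpr (le_trans (le_max_right _ _) (le_max_right _ _))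
  have hNb1 : (4 * K + 2) / c < N := lt_of_lt_of_le (lt_of_le_of_lt (le_max_left _ _) hN4) hNN4
  have hNb2 : 4 / c < N := lt_of_lt_of_le (lt_of_le_of_lt (le_max_right _ _) hN4) hNN4
  have hvN : c / 2 * N ≤ v N := hM2b N hNM2 hN1
  obtain ⟨i, hiN, hge⟩ := claim N hN1
  have hNr1 : 4 * K + 2 < c * N := by
    rw [div_lt_iff₀ hcpos] at hNb1; linarith
  have hNr2 : 4 < c * N := by
    rw [div_lt_iff₀ hcpos] at hNb2; linarith
  rcases lt_or_ge i M with him | him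
  · have h1 : |a i| ≤ K := hKb i him
    nlinarith
  · have h1 : |a i| ≤ c / 8 * i := hMb i him
    have h2 : (i : ℝ) ≤ N := Nat.cast_le.mpr hiN.le
    have h3 : |a i| ≤ c / 8 * N := le_trans h1 (by nlinarith)
    nlinarith

end Atkinson


instance : SFinite (Measure.count : Measure ℤ) := by
  rw [Measure.count]; infer_instance

/-- The cylindrical cascade `C(x, z) = (S x, z + f(x))` over an ergodic invertible
measure-preserving transformation `S` of a probability space, with integrable
zero-mean cocycle `f : X → ℤ`, is conservative on `X × ℤ` with the measure
`μ × #` (`#` = counting measure): almost every point of any set of positive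
measure returns to the set under a positive iterate. -/
theorem cylindrical_cascade_conservative {X : Type*} [MeasurableSpace X]
    (μ : Measure X) [IsProbabilityMeasure μ]
    (S : X ≃ᵐ X) (hS : Ergodic (⇑S) μ)
    (f : X → ℤ) (hf : Measurable f)
    (hfi : Integrable (fun x => (f x : ℝ)) μ)
    (hf0 : ∫ x, (f x : ℝ) ∂μ = 0)
    (C : X × ℤ → X × ℤ) (hC : ∀ p : X × ℤ, C p = (S p.1, p.2 + f p.1)) :
    ∀ E : Set (X × ℤ), MeasurableSet E →
      0 < (μ.prod (Measure.count : Measure ℤ)) E →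
      ∀ᵐ p ∂(μ.prod (Measure.count : Measure ℤ)),
        p ∈ E → ∃ n : ℕ, 0 < n ∧ C^[n] p ∈ E := by
  
  intro E hE _hpos
  have hCiter : ∀ (n : ℕ) (p : X × ℤ),
      C^[n] p = (S^[n] p.1, p.2 + birkhoffSum (⇑S) f n p.1) := by
    intro n
    induction n with
    | zero => intro p; simp
    | succ n ih =>
      intro p
      rw [Function.iterate_succ_apply', ih, hC]
      refine Prod.ext ?_ ?_
      · simp [Function.iterate_succ_apply']
      · simp only [birkhoffSum_succ]
        push_cast
        ring
  set A : ℤ → Set X := fun z => {x | (x, z) ∈ E} with hA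
  have hAm : ∀ z, MeasurableSet (A z) := fun z =>
    (measurable_id.prodMk measurable_const) hE
  have hkey : ∀ z, ∀ᵐ x ∂μ, x ∈ A z →
      ∃ n, 0 < n ∧ S^[n] x ∈ A z ∧ birkhoffSum (⇑S) f n x = 0 :=
    fun z => atkinson_int S hS f hf hfi hf0 (hAm z)
  set M : ℤ → Set X := fun z =>
    {x | ¬ (x ∈ A z → ∃ n, 0 < n ∧ S^[n] x ∈ A z ∧ birkhoffSum (⇑S) f n x = 0)} with hM
  have hMnull : ∀ z, μ (M z) = 0 := fun z => ae_iff.mp (hkey z)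
  rw [ae_iff]
  have hnull : (μ.prod (Measure.count : Measure ℤ)) (⋃ z : ℤ, (M z) ×ˢ ({z} : Set ℤ)) = 0 := by
    refine le_antisymm ?_ (zero_le)
    calc (μ.prod (Measure.count : Measure ℤ)) (⋃ z : ℤ, (M z) ×ˢ ({z} : Set ℤ))
        ≤ ∑' z : ℤ, (μ.prod (Measure.count : Measure ℤ)) ((M z) ×ˢ ({z} : Set ℤ)) :=
          measure_iUnion_le _
      _ = ∑' z : ℤ, μ (M z) * Measure.count ({z} : Set ℤ) := by
          simp_rw [Measure.prod_prod]
      _ = 0 := by simp [hMnull]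
  refine measure_mono_null ?_ hnull
  rintro ⟨x, z⟩ hp
  simp only [Set.mem_setOf_eq] at hp
  push_neg at hp
  obtain ⟨hpE, hnot⟩ := hp
  refine Set.mem_iUnion.mpr ⟨z, Set.mk_mem_prod ?_ rfl⟩
  intro hcontra
  obtain ⟨n, hn, hmem, hzero⟩ := hcontra hpE
  refine hnot n hn ?_
  rw [hCiter n (x, z)]
  have : z + (birkhoffSum (⇑S) f n x : ℤ) = z := by rw [hzero, add_zero]
  rw [this]
  exact hmem
end

section
/- Let (X, μ) be a probability space, S an ergodic invertible measure-preserving transformation of (X, μ), and f : X → ℤ an integrable function with ∫ f dμ = 0. Then for every measurable set B ⊆ X with μ(B) > 0, for μ-almost every x ∈ B there exist infinitely many positive integers n such that S^n x ∈ B and ∑_{i=0}^{n-1} f(S^i x) = 0. -/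
open MeasureTheory Filter Topology

set_option maxHeartbeats 1000000
set_option synthInstance.maxHeartbeats 400000

section KAAux

variable {X : Type*} [MeasurableSpace X] {μ : Measure X}

private lemma ka_integral_comp {T : X → X} (hT : MeasurePreserving T μ μ) {u : X → ℝ}
    (hu : AEStronglyMeasurable u μ) : ∫ x, u (T x) ∂μ = ∫ x, u x ∂μ := by
  have h1 : ∫ x, u x ∂(μ.map T) = ∫ x, u (T x) ∂μ :=
    integral_map hT.aemeasurable (by rwa [hT.map_eq])
  rw [← h1, hT.map_eq]

private lemma ka_integrable_comp {T : X → X} (hT : MeasurePreserving T μ μ) {u : X → ℝ}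
    (hu : Integrable u μ) : Integrable (fun x => u (T x)) μ :=
  (hT.integrable_comp hu.aestronglyMeasurable).2 hu

private lemma ka_int_abs_le_norm_L2 [IsProbabilityMeasure μ] (u : Lp ℝ 2 μ) :
    ∫ x, |u x| ∂μ ≤ ‖u‖ := by
  have hm : AEStronglyMeasurable (⇑u) μ := Lp.aestronglyMeasurable u
  have h1 : ∫ x, |u x| ∂μ = (eLpNorm (⇑u) 1 μ).toReal := by
    rw [eLpNorm_one_eq_lintegral_enorm]
    simpa [Real.norm_eq_abs] using integral_norm_eq_lintegral_enorm hm
  rw [h1, Lp.norm_def]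
  exact ENNReal.toReal_mono (Lp.eLpNorm_ne_top u)
    (eLpNorm_le_eLpNorm_of_exponent_le (by norm_num) hm)

/-- L² mean ergodic theorem specialised: for an ergodic `T` and `g ∈ L²` with zero mean,
the L¹ norms of the Birkhoff averages tend to zero. -/
private lemma ka_stepA_L2 [IsProbabilityMeasure μ] {T : X → X} (hT : Ergodic T μ)
    {g : X → ℝ} (hg2 : MemLp g 2 μ) (hg0 : ∫ x, g x ∂μ = 0) :
    Tendsto (fun N : ℕ => ∫ x, |(N : ℝ)⁻¹ * ∑ i ∈ Finset.range N, g (T^[i] x)| ∂μ)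
      atTop (𝓝 0) := by
  classical
  have hMP : MeasurePreserving T μ μ := hT.toMeasurePreserving
  set U : Lp ℝ 2 μ →L[ℝ] Lp ℝ 2 μ :=
    (Lp.compMeasurePreservingₗᵢ ℝ T hMP).toContinuousLinearMap with hUdef
  have hUapp : ∀ v : Lp ℝ 2 μ, U v = Lp.compMeasurePreserving T hMP v := fun _ => rfl
  have hUnorm : ‖U‖ ≤ 1 :=
    ContinuousLinearMap.opNorm_le_bound _ zero_le_one fun u => by
      rw [one_mul]
      exact le_of_eq ((Lp.compMeasurePreservingₗᵢ ℝ T hMP).norm_map u)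
  set gL : Lp ℝ 2 μ := hg2.toLp g with hgLdef
  have hgint : Integrable g μ := hg2.integrable one_le_two
  -- identification of iterates
  have hiter : ∀ n : ℕ, ⇑((⇑U)^[n] gL) =ᵐ[μ] g ∘ T^[n] := by
    intro n
    induction n with
    | zero => simpa using hg2.coeFn_toLp
    | succ n ih =>
      have h1 : (⇑U)^[n + 1] gL = U ((⇑U)^[n] gL) := Function.iterate_succ_apply' _ _ _
      rw [h1, hUapp]
      refine (Lp.coeFn_compMeasurePreserving _ hMP).trans ?_
      refine (hMP.quasiMeasurePreserving.ae_eq_comp ih).trans ?_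
      exact Filter.EventuallyEq.of_eq (by rw [Function.comp_assoc, ← Function.iterate_succ])
  -- identification of Birkhoff sums
  have hsum : ∀ N : ℕ, ⇑(birkhoffSum (⇑U) id N gL) =ᵐ[μ]
      fun x => ∑ i ∈ Finset.range N, g (T^[i] x) := by
    intro N
    induction N with
    | zero => simp [birkhoffSum]; exact Lp.coeFn_zero ℝ 2 μ
    | succ N ih =>
      have h1 : birkhoffSum (⇑U) id (N + 1) gL
          = birkhoffSum (⇑U) id N gL + (⇑U)^[N] gL := by
        simpa using birkhoffSum_succ (⇑U) id N gL
      rw [h1]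
      filter_upwards [Lp.coeFn_add (birkhoffSum (⇑U) id N gL) ((⇑U)^[N] gL), ih, hiter N]
        with x hx hx1 hx2
      simp only [hx, Pi.add_apply, hx1, hx2, Function.comp_apply, Finset.sum_range_succ]
  have havg : ∀ N : ℕ, ⇑(birkhoffAverage ℝ (⇑U) id N gL) =ᵐ[μ]
      fun x => (N : ℝ)⁻¹ * ∑ i ∈ Finset.range N, g (T^[i] x) := by
    intro N
    have h0 : birkhoffAverage ℝ (⇑U) id N gL = (N : ℝ)⁻¹ • birkhoffSum (⇑U) id N gL := rfl
    rw [h0]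
    filter_upwards [Lp.coeFn_smul ((N : ℝ)⁻¹) (birkhoffSum (⇑U) id N gL), hsum N] with x hx hx1
    simp only [hx, Pi.smul_apply, hx1, smul_eq_mul]
  -- von Neumann
  have hvn := U.tendsto_birkhoffAverage_orthogonalProjection hUnorm gL
  set PgL : Lp ℝ 2 μ :=
    ↑(Submodule.orthogonalProjectionOnto (LinearMap.eqLocus (U : Lp ℝ 2 μ →ₗ[ℝ] Lp ℝ 2 μ) ((1 : Lp ℝ 2 μ →L[ℝ] Lp ℝ 2 μ) : Lp ℝ 2 μ →ₗ[ℝ] Lp ℝ 2 μ)) gL) with hPdef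
  have hPmem := (Submodule.orthogonalProjectionOnto (LinearMap.eqLocus (U : Lp ℝ 2 μ →ₗ[ℝ] Lp ℝ 2 μ) ((1 : Lp ℝ 2 μ →L[ℝ] Lp ℝ 2 μ) : Lp ℝ 2 μ →ₗ[ℝ] Lp ℝ 2 μ)) gL).2
  rw [LinearMap.mem_eqLocus] at hPmem
  have hPfix : U PgL = PgL := by
    exact hPmem
  have hfixae : (⇑PgL) ∘ T =ᵐ[μ] ⇑PgL := by
    have h1 : ⇑(U PgL) =ᵐ[μ] (⇑PgL) ∘ T := by
      rw [hUapp]; exact Lp.coeFn_compMeasurePreserving _ hMP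
    rw [hPfix] at h1
    exact h1.symm
  obtain ⟨c, hc⟩ := hT.ae_eq_const_of_ae_eq_comp_ae (Lp.aestronglyMeasurable PgL) hfixae
  -- inner product with the constant 1
  set one : Lp ℝ 2 μ := (memLp_const (1 : ℝ)).toLp (fun _ => (1 : ℝ)) with honedef
  have hinner : ∀ u : Lp ℝ 2 μ, (inner ℝ u one : ℝ) = ∫ x, u x ∂μ := by
    intro u
    rw [L2.inner_def]
    refine integral_congr_ae ?_
    filter_upwards [(memLp_const (1 : ℝ)).coeFn_toLp] with x hx
    rw [hx]
    simp [RCLike.inner_apply]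
  have hintsum : ∀ N : ℕ, ∫ x, ∑ i ∈ Finset.range N, g (T^[i] x) ∂μ = 0 := by
    intro N
    rw [integral_finset_sum _ (fun i _ => ka_integrable_comp (hMP.iterate i) hgint)]
    refine Finset.sum_eq_zero fun i _ => ?_
    rw [ka_integral_comp (hMP.iterate i) hg2.aestronglyMeasurable, hg0]
  have htend2 : Tendsto (fun N => (inner ℝ (birkhoffAverage ℝ (⇑U) id N gL) one : ℝ))
      atTop (𝓝 (inner ℝ PgL one : ℝ)) := hvn.inner tendsto_const_nhds
  have heval : ∀ N : ℕ, (inner ℝ (birkhoffAverage ℝ (⇑U) id N gL) one : ℝ) = 0 := by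
    intro N
    rw [hinner, integral_congr_ae (havg N), integral_const_mul, hintsum N, mul_zero]
  have hlim0 : (inner ℝ PgL one : ℝ) = 0 := by
    have h2 : Tendsto (fun N : ℕ => (inner ℝ (birkhoffAverage ℝ (⇑U) id N gL) one : ℝ))
        atTop (𝓝 0) := by
      simpa [heval] using (tendsto_const_nhds :
        Tendsto (fun _ : ℕ => (0 : ℝ)) atTop (𝓝 0))
    exact tendsto_nhds_unique htend2 h2
  have hintP : ∫ x, PgL x ∂μ = c := by
    rw [integral_congr_ae hc]
    simp
  have hc0 : c = 0 := by
    rw [← hintP, ← hinner PgL, hlim0]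
  have hPnorm : ‖PgL‖ = 0 := by
    have h1 : ⇑PgL =ᵐ[μ] (0 : X → ℝ) := by
      refine hc.trans (Filter.EventuallyEq.of_eq ?_)
      funext x; simp [hc0, Function.const]
    rw [Lp.norm_def, eLpNorm_congr_ae h1, eLpNorm_zero]
    simp
  -- squeeze
  have hub : ∀ N : ℕ, ∫ x, |(N : ℝ)⁻¹ * ∑ i ∈ Finset.range N, g (T^[i] x)| ∂μ
      ≤ ‖birkhoffAverage ℝ (⇑U) id N gL - PgL‖ + ‖PgL‖ := by
    intro N
    have h1 : ∫ x, |(N : ℝ)⁻¹ * ∑ i ∈ Finset.range N, g (T^[i] x)| ∂μ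
        = ∫ x, |(birkhoffAverage ℝ (⇑U) id N gL : Lp ℝ 2 μ) x| ∂μ := by
      refine integral_congr_ae ?_
      filter_upwards [havg N] with x hx
      rw [hx]
    rw [h1]
    refine le_trans (ka_int_abs_le_norm_L2 _) ?_
    calc ‖birkhoffAverage ℝ (⇑U) id N gL‖
        = ‖(birkhoffAverage ℝ (⇑U) id N gL - PgL) + PgL‖ := by rw [sub_add_cancel]
      _ ≤ ‖birkhoffAverage ℝ (⇑U) id N gL - PgL‖ + ‖PgL‖ := norm_add_le _ _
  have hnt : Tendsto (fun N : ℕ => ‖birkhoffAverage ℝ (⇑U) id N gL - PgL‖ + ‖PgL‖)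
      atTop (𝓝 0) := by
    have h1 : Tendsto (fun N : ℕ => ‖birkhoffAverage ℝ (⇑U) id N gL - PgL‖)
        atTop (𝓝 0) := tendsto_iff_norm_sub_tendsto_zero.mp hvn
    have h2 : Tendsto (fun N : ℕ => ‖birkhoffAverage ℝ (⇑U) id N gL - PgL‖ + ‖PgL‖)
        atTop (𝓝 (0 + ‖PgL‖)) := h1.add tendsto_const_nhds
    have h3 : (0:ℝ) + ‖PgL‖ = 0 := by rw [hPnorm, add_zero]
    rw [h3] at h2
    exact h2
  exact squeeze_zero (fun N => integral_nonneg fun x => abs_nonneg _) hub hnt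

/-- tail of an integrable nonnegative function -/
private lemma ka_tail_small {W : X → ℝ} (hWm : Measurable W)
    (hWi : Integrable W μ) (hWpos : ∀ x, 0 ≤ W x) {ε : ℝ} (hε : 0 < ε) :
    ∃ M : ℕ, ∫ x, max (W x - M) 0 ∂μ < ε := by
  have htend0 : Tendsto (fun M : ℕ => ∫ x, max (W x - M) 0 ∂μ) atTop
      (𝓝 (∫ _x, (0 : ℝ) ∂μ)) := by
    apply tendsto_integral_of_dominated_convergence (fun x => |W x|)
    · intro M
      exact ((hWm.sub measurable_const).max measurable_const).aestronglyMeasurable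
    · exact hWi.abs
    · intro M
      refine Eventually.of_forall fun x => ?_
      have h1 : (0 : ℝ) ≤ max (W x - M) 0 := le_max_right _ _
      rw [Real.norm_eq_abs, abs_of_nonneg h1, abs_of_nonneg (hWpos x)]
      exact max_le (by simpa using sub_le_self (W x) (Nat.cast_nonneg M)) (hWpos x)
    · refine Eventually.of_forall fun x => ?_
      have h2 : (fun M : ℕ => max (W x - M) 0) =ᶠ[atTop] fun _ => (0 : ℝ) := by
        filter_upwards [eventually_ge_atTop ⌈W x⌉₊] with M hM
        have h3 : W x ≤ (M : ℝ) := le_trans (Nat.le_ceil _) (by exact_mod_cast hM)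
        rw [max_eq_right (by linarith)]
      exact Tendsto.congr' h2.symm tendsto_const_nhds
  have htend : Tendsto (fun M : ℕ => ∫ x, max (W x - M) 0 ∂μ) atTop (𝓝 0) := by
    simpa using htend0
  exact (htend.eventually_lt_const hε).exists

/-- Step A: for an ergodic transformation and an integrable zero-mean function,
some Birkhoff sum has small L¹ norm relative to its length. -/
private lemma ka_stepA [IsProbabilityMeasure μ] {T : X → X} (hT : Ergodic T μ)
    {F : X → ℝ} (hFm : Measurable F) (hFi : Integrable F μ) (hF0 : ∫ x, F x ∂μ = 0)
    {ε : ℝ} (hε : 0 < ε) :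
    ∃ m : ℕ, 0 < m ∧ ∫ x, |∑ i ∈ Finset.range m, F (T^[i] x)| ∂μ ≤ ε * m := by
  classical
  have hMP : MeasurePreserving T μ μ := hT.toMeasurePreserving
  -- truncation
  have htr : Tendsto (fun M : ℕ => ∫ x, |F x - max (-(M : ℝ)) (min (F x) M)| ∂μ)
      atTop (𝓝 0) := by
    have htend0 : Tendsto (fun M : ℕ => ∫ x, |F x - max (-(M : ℝ)) (min (F x) M)| ∂μ)
        atTop (𝓝 (∫ _x, (0 : ℝ) ∂μ)) := by
      apply tendsto_integral_of_dominated_convergence (fun x => |F x|)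
      · intro M
        have hmeas : Measurable fun x => |F x - max (-(M : ℝ)) (min (F x) M)| :=
          (hFm.sub (measurable_const.max (hFm.min measurable_const))).abs
        exact hmeas.aestronglyMeasurable
      · exact hFi.abs
      · intro M
        refine Eventually.of_forall fun x => ?_
        rw [Real.norm_eq_abs, abs_abs]
        have hM0 : (0 : ℝ) ≤ M := Nat.cast_nonneg M
        rcases le_total (F x) (M : ℝ) with h1 | h1
        · rcases le_total (-(M : ℝ)) (F x) with h2 | h2
          · rw [min_eq_left h1, max_eq_right h2]
            simp [abs_nonneg]
          · rw [min_eq_left h1, max_eq_left h2, abs_le]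
            constructor
            · have := neg_abs_le (F x); linarith
            · have := le_abs_self (F x); have := neg_abs_le (F x); linarith
        · rw [min_eq_right h1, max_eq_right (by linarith : -(M : ℝ) ≤ (M : ℝ)), abs_le]
          constructor
          · have := le_abs_self (F x); linarith
          · have := le_abs_self (F x); linarith
      · refine Eventually.of_forall fun x => ?_
        have h2 : (fun M : ℕ => |F x - max (-(M : ℝ)) (min (F x) M)|)
            =ᶠ[atTop] fun _ => (0 : ℝ) := by
          filter_upwards [eventually_ge_atTop ⌈|F x|⌉₊] with M hM
          have h3 : |F x| ≤ (M : ℝ) := le_trans (Nat.le_ceil _) (by exact_mod_cast hM)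
          have h4 : F x ≤ (M : ℝ) := le_trans (le_abs_self _) h3
          have h5 : -(M : ℝ) ≤ F x := by have := neg_abs_le (F x); linarith
          rw [min_eq_left h4, max_eq_right h5]
          simp
        exact Tendsto.congr' h2.symm tendsto_const_nhds
    simpa using htend0
  have hε4 : (0 : ℝ) < ε / 4 := by linarith
  obtain ⟨M, hM⟩ := (htr.eventually_lt_const hε4).exists
  set g : X → ℝ := fun x => max (-(M : ℝ)) (min (F x) M) with hgdef
  have hgm : Measurable g := measurable_const.max (hFm.min measurable_const)
  have hM0 : (0 : ℝ) ≤ M := Nat.cast_nonneg M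
  have hgb : ∀ x, |g x| ≤ M := by
    intro x
    rw [abs_le]
    exact ⟨le_max_left _ _, max_le (by linarith) (le_trans (min_le_right _ _) le_rfl)⟩
  have hg2 : MemLp g 2 μ := MemLp.of_bound hgm.aestronglyMeasurable M
    (Eventually.of_forall fun x => by simpa [Real.norm_eq_abs] using hgb x)
  have hgi : Integrable g μ := hg2.integrable one_le_two
  set c : ℝ := ∫ x, g x ∂μ with hcdef
  have hcabs : |c| ≤ ε / 4 := by
    have h1 : c = ∫ x, (g x - F x) ∂μ := by
      rw [integral_sub hgi hFi, hF0, sub_zero]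
    rw [h1]
    refine le_trans ?_ (le_of_lt hM)
    calc |∫ x, (g x - F x) ∂μ| ≤ ∫ x, |g x - F x| ∂μ := by
          simpa [Real.norm_eq_abs] using norm_integral_le_integral_norm (fun x => g x - F x)
      _ = ∫ x, |F x - g x| ∂μ := by simp [abs_sub_comm]
  set h : X → ℝ := fun x => g x - c with hhdef
  have hh2 : MemLp h 2 μ := hg2.sub (memLp_const c)
  have hhi : Integrable h μ := hh2.integrable one_le_two
  have hh0 : ∫ x, h x ∂μ = 0 := by
    rw [integral_sub hgi (integrable_const c)]
    simp [hcdef]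
  have hFh : ∫ x, |F x - h x| ∂μ ≤ ε / 2 := by
    have hI1 : Integrable (fun x => |F x - g x|) μ := (hFi.sub hgi).abs
    have hI2 : Integrable (fun x => |F x - h x|) μ := (hFi.sub hhi).abs
    have h1 : ∀ x, |F x - h x| ≤ |F x - g x| + |c| := by
      intro x
      have : F x - h x = (F x - g x) + c := by simp [hhdef]; ring
      rw [this]
      exact le_trans (abs_add_le _ _) (by simp)
    calc ∫ x, |F x - h x| ∂μ ≤ ∫ x, (|F x - g x| + |c|) ∂μ := by
          refine integral_mono hI2 (hI1.add (integrable_const _)) h1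
      _ = (∫ x, |F x - g x| ∂μ) + |c| := by
          rw [integral_add hI1 (integrable_const _)]
          simp
      _ ≤ ε / 4 + ε / 4 := add_le_add (le_of_lt hM) hcabs
      _ = ε / 2 := by ring
  -- mean ergodic theorem for h
  have hmain := ka_stepA_L2 hT hh2 hh0
  obtain ⟨m, hm⟩ := ((hmain.eventually_lt_const (by linarith : (0:ℝ) < ε / 2)).and
    (eventually_ge_atTop 1)).exists
  obtain ⟨hmlt, hm1⟩ := hm
  have hmpos : 0 < m := hm1
  refine ⟨m, hmpos, ?_⟩
  have hmR : (0 : ℝ) < m := by exact_mod_cast hmpos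
  -- integrability of the pieces
  have hbhi : Integrable (fun x => ∑ i ∈ Finset.range m, h (T^[i] x)) μ :=
    integrable_finset_sum _ fun i _ => ka_integrable_comp (hMP.iterate i) hhi
  have hdfi : Integrable (fun x => ∑ i ∈ Finset.range m, |F (T^[i] x) - h (T^[i] x)|) μ :=
    integrable_finset_sum _ fun i _ => ka_integrable_comp (hMP.iterate i) (hFi.sub hhi).abs
  have hkey : ∀ x, |∑ i ∈ Finset.range m, F (T^[i] x)|
      ≤ |∑ i ∈ Finset.range m, h (T^[i] x)|
        + ∑ i ∈ Finset.range m, |F (T^[i] x) - h (T^[i] x)| := by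
    intro x
    have h1 : ∑ i ∈ Finset.range m, F (T^[i] x)
        = (∑ i ∈ Finset.range m, h (T^[i] x))
          + ∑ i ∈ Finset.range m, (F (T^[i] x) - h (T^[i] x)) := by
      rw [← Finset.sum_add_distrib]
      refine Finset.sum_congr rfl fun i _ => by ring
    rw [h1]
    refine le_trans (abs_add_le _ _) ?_
    exact add_le_add le_rfl (Finset.abs_sum_le_sum_abs _ _)
  have hsum1 : ∫ x, |∑ i ∈ Finset.range m, h (T^[i] x)| ∂μ ≤ (ε / 2) * m := by
    have h1 : ∀ x, |∑ i ∈ Finset.range m, h (T^[i] x)|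
        = m * |(m : ℝ)⁻¹ * ∑ i ∈ Finset.range m, h (T^[i] x)| := by
      intro x
      rw [abs_mul, abs_inv, abs_of_nonneg (le_of_lt hmR), ← mul_assoc,
        mul_inv_cancel₀ (ne_of_gt hmR), one_mul]
    calc ∫ x, |∑ i ∈ Finset.range m, h (T^[i] x)| ∂μ
        = ∫ x, m * |(m : ℝ)⁻¹ * ∑ i ∈ Finset.range m, h (T^[i] x)| ∂μ := by
          exact integral_congr_ae (Eventually.of_forall h1)
      _ = m * ∫ x, |(m : ℝ)⁻¹ * ∑ i ∈ Finset.range m, h (T^[i] x)| ∂μ := by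
          rw [integral_const_mul]
      _ ≤ m * (ε / 2) := by
          exact mul_le_mul_of_nonneg_left (le_of_lt hmlt) (le_of_lt hmR)
      _ = (ε / 2) * m := by ring
  have hsum2 : ∫ x, ∑ i ∈ Finset.range m, |F (T^[i] x) - h (T^[i] x)| ∂μ ≤ (ε / 2) * m := by
    have hI3 : Integrable (fun x => |F x - h x|) μ := (hFi.sub hhi).abs
    have hI4 : ∀ i : ℕ, Integrable (fun x => |F (T^[i] x) - h (T^[i] x)|) μ := fun i =>
      ka_integrable_comp (hMP.iterate i) hI3
    rw [integral_finset_sum _ (fun i _ => hI4 i)]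
    have h1 : ∀ i ∈ Finset.range m,
        ∫ x, |F (T^[i] x) - h (T^[i] x)| ∂μ = ∫ x, |F x - h x| ∂μ := fun i _ =>
      ka_integral_comp (hMP.iterate i) hI3.aestronglyMeasurable
    rw [Finset.sum_congr rfl h1, Finset.sum_const, Finset.card_range, nsmul_eq_mul]
    calc (m : ℝ) * ∫ x, |F x - h x| ∂μ ≤ m * (ε / 2) :=
          mul_le_mul_of_nonneg_left hFh (le_of_lt hmR)
      _ = (ε / 2) * m := by ring
  calc ∫ x, |∑ i ∈ Finset.range m, F (T^[i] x)| ∂μ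
      ≤ ∫ x, (|∑ i ∈ Finset.range m, h (T^[i] x)|
          + ∑ i ∈ Finset.range m, |F (T^[i] x) - h (T^[i] x)|) ∂μ := by
        refine integral_mono ?_ (hbhi.abs.add hdfi) hkey
        exact (integrable_finset_sum _ fun i _ =>
          ka_integrable_comp (hMP.iterate i) hFi).abs
    _ = (∫ x, |∑ i ∈ Finset.range m, h (T^[i] x)| ∂μ)
        + ∫ x, ∑ i ∈ Finset.range m, |F (T^[i] x) - h (T^[i] x)| ∂μ :=
        integral_add hbhi.abs hdfi
    _ ≤ (ε / 2) * m + (ε / 2) * m := add_le_add hsum1 hsum2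
    _ = ε * m := by ring

end KAAux

/-- **Recurrence form of the Krygin–Atkinson theorem.** For an ergodic invertible
measure-preserving transformation `S` of a probability space `(X, μ)` and an
integrable `f : X → ℤ` with zero mean, for every set `B` of positive measure and
almost every `x ∈ B`, there are infinitely many positive `n` with `S^[n] x ∈ B`
and vanishing Birkhoff sum. -/
theorem krygin_atkinson_recurrence {X : Type*} [MeasurableSpace X] (μ : Measure X)
    [IsProbabilityMeasure μ] (S : X ≃ᵐ X) (hS : Ergodic (⇑S) μ)
    (f : X → ℤ) (hf : Measurable f)
    (hfi : Integrable (fun x => (f x : ℝ)) μ)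
    (hf0 : ∫ x, (f x : ℝ) ∂μ = 0)
    (B : Set X) (hB : MeasurableSet B) (hBpos : 0 < μ B) :
    ∀ᵐ x ∂μ, x ∈ B → ∃ᶠ n in atTop,
      0 < n ∧ (⇑S)^[n] x ∈ B ∧ ∑ i ∈ Finset.range n, f ((⇑S)^[i] x) = 0 := by
  classical
  set T : X → X := ⇑S with hTdef
  have hMP : MeasurePreserving T μ μ := hS.toMeasurePreserving
  set F : X → ℝ := fun x => (f x : ℝ) with hFdef
  have hFm : Measurable F := (measurable_of_countable _).comp hf
  set bZ : ℕ → X → ℤ := fun n x => ∑ i ∈ Finset.range n, f (T^[i] x) with hbZdef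
  have hbZm : ∀ n, Measurable (bZ n) := fun n =>
    Finset.measurable_sum _ fun i _ => hf.comp (hMP.measurable.iterate i)
  have hbZadd : ∀ a b x, bZ (a + b) x = bZ a x + bZ b (T^[a] x) := fun a b x => by
    simpa [birkhoffSum] using birkhoffSum_add T f a b x
  set bR : ℕ → X → ℝ := fun n x => ∑ i ∈ Finset.range n, F (T^[i] x) with hbRdef
  have hbRadd : ∀ a b x, bR (a + b) x = bR a x + bR b (T^[a] x) := fun a b x => by
    simpa [birkhoffSum] using birkhoffSum_add T F a b x
  have hcast : ∀ n x, ((bZ n x : ℤ) : ℝ) = bR n x := by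
    intro n x
    simp [hbZdef, hbRdef, hFdef]
  have hbRi : ∀ n, Integrable (bR n) μ :=
    fun n => integrable_finset_sum _ fun i _ => ka_integrable_comp (hMP.iterate i) hfi
  -- the set of points of B that never return to B with zero Birkhoff sum
  set D : Set X := B ∩ ⋂ n : ℕ, {x | ¬(0 < n ∧ T^[n] x ∈ B ∧ bZ n x = 0)} with hDdef
  have hDm : MeasurableSet D := by
    refine hB.inter (MeasurableSet.iInter fun n => ?_)
    have h1 : {x | ¬(0 < n ∧ T^[n] x ∈ B ∧ bZ n x = 0)}
        = ({x : X | 0 < n} ∩ (T^[n] ⁻¹' B ∩ bZ n ⁻¹' {0}))ᶜ := by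
      ext x
      simp [Set.mem_setOf_eq, and_assoc]
    rw [h1]
    exact ((MeasurableSet.const _).inter (((hMP.measurable.iterate n) hB).inter
      ((hbZm n) (measurableSet_singleton 0)))).compl
  have hDB : D ⊆ B := Set.inter_subset_left
  have hDprop : ∀ y ∈ D, ∀ n : ℕ, 0 < n → T^[n] y ∈ B → bZ n y ≠ 0 := by
    intro y hy n hn hnB hz
    have h1 := Set.mem_iInter.1 hy.2 n
    exact h1 ⟨hn, hnB, hz⟩
  -- reduction: if the conclusion fails, D has positive measure
  by_contra hcon
  rw [ae_iff] at hcon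
  have hED : {x | ¬(x ∈ B → ∃ᶠ n in atTop, 0 < n ∧ T^[n] x ∈ B ∧ bZ n x = 0)}
      ⊆ ⋃ n : ℕ, T^[n] ⁻¹' D := by
    intro x hx
    simp only [Set.mem_setOf_eq] at hx
    rw [Classical.not_imp] at hx
    obtain ⟨hxB, hxQ⟩ := hx
    rw [not_frequently] at hxQ
    rw [eventually_atTop] at hxQ
    obtain ⟨a, ha⟩ := hxQ
    set R : Finset ℕ := (Finset.range a).filter
      (fun n => 0 < n ∧ T^[n] x ∈ B ∧ bZ n x = 0) with hRdef
    have key : ∀ n₀ : ℕ, T^[n₀] x ∈ B → bZ n₀ x = 0 → (∀ k ∈ R, k ≤ n₀) →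
        T^[n₀] x ∈ D := by
      intro n₀ hB0 hz0 hmax
      refine ⟨hB0, Set.mem_iInter.2 fun n => ?_⟩
      simp only [Set.mem_setOf_eq]
      rintro ⟨hn, hnB, hnz⟩
      have hcomp : T^[n₀ + n] x = T^[n] (T^[n₀] x) := by
        rw [add_comm]
        exact Function.iterate_add_apply T n n₀ x
      have hz1 : bZ (n₀ + n) x = 0 := by
        rw [hbZadd n₀ n x, hz0, hnz, add_zero]
      have hB1 : T^[n₀ + n] x ∈ B := by rw [hcomp]; exact hnB
      rcases le_or_gt a (n₀ + n) with hge | hlt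
      · exact ha (n₀ + n) hge ⟨by omega, hB1, hz1⟩
      · have hmem : n₀ + n ∈ R := by
          rw [hRdef, Finset.mem_filter, Finset.mem_range]
          exact ⟨hlt, by omega, hB1, hz1⟩
        have := hmax _ hmem
        omega
    by_cases hRe : R.Nonempty
    · set n₀ := R.max' hRe with hn₀
      have hmem : n₀ ∈ R := R.max'_mem hRe
      rw [hRdef, Finset.mem_filter] at hmem
      exact Set.mem_iUnion.2 ⟨n₀, key n₀ hmem.2.2.1 hmem.2.2.2
        (fun k hk => R.le_max' k hk)⟩
    · refine Set.mem_iUnion.2 ⟨0, key 0 (by simpa using hxB) (by simp [hbZdef]) ?_⟩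
      intro k hk
      exact absurd ⟨k, hk⟩ hRe
  have hDpos : μ D ≠ 0 := by
    intro h0
    apply hcon
    refine measure_mono_null hED ?_
    exact measure_iUnion_null fun n => by
      rw [(hMP.iterate n).measure_preimage hDm.nullMeasurableSet, h0]
  set δ : ℝ := (μ D).toReal with hδdef
  have hδpos : 0 < δ := ENNReal.toReal_pos hDpos (measure_ne_top μ D)
  -- Step A with ε = δ/8
  obtain ⟨m, hmpos, hSm⟩ := ka_stepA hS hFm hfi hf0 (show (0:ℝ) < δ / 8 by linarith)
  have hmR : (0 : ℝ) < m := by exact_mod_cast hmpos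
  -- tail bound for the window function W
  set W : X → ℝ := fun x => ∑ i ∈ Finset.range m, |F (T^[i] x)| with hWdef
  have hWm : Measurable W :=
    Finset.measurable_sum _ fun i _ => (hFm.comp (hMP.measurable.iterate i)).abs
  have hWi : Integrable W μ :=
    integrable_finset_sum _ fun i _ => (ka_integrable_comp (hMP.iterate i) hfi).abs
  have hWpos : ∀ x, 0 ≤ W x := fun x => Finset.sum_nonneg fun i _ => abs_nonneg _
  obtain ⟨M', hM'⟩ := ka_tail_small hWm hWi hWpos
    (show (0:ℝ) < (δ / 8) * m by positivity)
  -- choose N large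
  have hWtail : Integrable (fun y => max (W y - (M' : ℝ)) 0) μ :=
    (hWi.sub (integrable_const _)).pos_part
  obtain ⟨N, hN⟩ := exists_nat_gt ((m : ℝ) + (4 * M' + 2) / (δ / 2))
  set Q : ℕ := N / m + 1 with hQdef
  -- the dominating function Φ
  set Φ : X → ℝ := fun x => (∑ j ∈ Finset.range Q, |bR m (T^[m * j] x)|) + (M' : ℝ)
    + ∑ q ∈ Finset.range Q, max (W (T^[m * q] x) - M') 0 with hΦdef
  have hΦ0 : ∀ x, 0 ≤ Φ x := by
    intro x
    have h1 : (0:ℝ) ≤ ∑ j ∈ Finset.range Q, |bR m (T^[m * j] x)| :=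
      Finset.sum_nonneg fun j _ => abs_nonneg _
    have h2 : (0:ℝ) ≤ ∑ q ∈ Finset.range Q, max (W (T^[m * q] x) - M') 0 :=
      Finset.sum_nonneg fun q _ => le_max_right _ _
    have h3 : (0:ℝ) ≤ (M' : ℝ) := Nat.cast_nonneg _
    simp only [hΦdef]
    linarith
  have hΦi : Integrable Φ μ := by
    refine Integrable.add (Integrable.add ?_ (integrable_const _)) ?_
    · exact integrable_finset_sum _ fun j _ =>
        ka_integrable_comp (hMP.iterate (m * j)) (hbRi m).abs
    · exact integrable_finset_sum _ fun q _ =>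
        ka_integrable_comp (hMP.iterate (m * q)) hWtail
  -- blocks estimate : |bR (m*q) x| ≤ ∑_{j<q} |bR m (T^[m j] x)|
  have hblock : ∀ q x, |bR (m * q) x| ≤ ∑ j ∈ Finset.range q, |bR m (T^[m * j] x)| := by
    intro q
    induction q with
    | zero => intro x; simp [hbRdef]
    | succ q ih =>
      intro x
      have h1 : bR (m * (q + 1)) x = bR (m * q) x + bR m (T^[m * q] x) := by
        rw [Nat.mul_succ]
        exact hbRadd (m * q) m x
      rw [h1, Finset.sum_range_succ]
      exact le_trans (abs_add_le _ _) (add_le_add (ih x) le_rfl)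
  -- pointwise key bound : |bR k x| ≤ Φ x for k < N
  have hkey : ∀ x, ∀ k < N, |bR k x| ≤ Φ x := by
    intro x k hk
    set q : ℕ := k / m with hq
    set r : ℕ := k % m with hr
    have hkqr : m * q + r = k := Nat.div_add_mod k m
    have hqQ : q < Q := by
      have : k / m ≤ N / m := Nat.div_le_div_right (le_of_lt hk)
      omega
    have hrm : r < m := Nat.mod_lt _ hmpos
    have h1 : bR k x = bR (m * q) x + bR r (T^[m * q] x) := by
      rw [← hkqr]; exact hbRadd (m * q) r x
    have h2 : |bR (m * q) x| ≤ ∑ j ∈ Finset.range Q, |bR m (T^[m * j] x)| := by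
      refine le_trans (hblock q x) ?_
      refine Finset.sum_le_sum_of_subset_of_nonneg ?_ fun j _ _ => abs_nonneg _
      exact Finset.range_subset_range.2 (le_of_lt hqQ)
    have h3 : |bR r (T^[m * q] x)| ≤ W (T^[m * q] x) := by
      refine le_trans (Finset.abs_sum_le_sum_abs _ _) ?_
      refine Finset.sum_le_sum_of_subset_of_nonneg ?_ fun i _ _ => abs_nonneg _
      exact Finset.range_subset_range.2 (le_of_lt hrm)
    have h4 : W (T^[m * q] x) ≤ (M' : ℝ) + max (W (T^[m * q] x) - M') 0 := by
      have := le_max_left (W (T^[m * q] x) - M') 0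
      linarith
    have h5 : max (W (T^[m * q] x) - M') 0
        ≤ ∑ q' ∈ Finset.range Q, max (W (T^[m * q'] x) - M') 0 :=
      Finset.single_le_sum (f := fun q' => max (W (T^[m * q'] x) - M') 0)
        (fun q' _ => le_max_right _ _) (Finset.mem_range.2 hqQ)
    have h6 : |bR k x| ≤ |bR (m * q) x| + |bR r (T^[m * q] x)| := by
      rw [h1]; exact abs_add_le _ _
    simp only [hΦdef]
    linarith
  -- the visit-counting function
  have hVle : ∀ x, (∑ k ∈ Finset.range N, if T^[k] x ∈ D then (1:ℝ) else 0)
      ≤ 2 * Φ x + 1 := by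
    intro x
    set K : Finset ℕ := (Finset.range N).filter (fun k => T^[k] x ∈ D) with hKdef
    have hsb : (∑ k ∈ Finset.range N, if T^[k] x ∈ D then (1:ℝ) else 0) = K.card := by
      rw [Finset.sum_boole]
    rw [hsb]
    set MZ : ℤ := ⌊Φ x⌋ with hMZ
    have hMZ0 : 0 ≤ MZ := Int.floor_nonneg.2 (hΦ0 x)
    have hmap : ∀ k ∈ K, bZ k x ∈ Finset.Icc (-MZ) MZ := by
      intro k hk
      rw [hKdef, Finset.mem_filter, Finset.mem_range] at hk
      have h1 : |bR k x| ≤ Φ x := hkey x k hk.1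
      have h2 : |((bZ k x : ℤ) : ℝ)| ≤ Φ x := by rw [hcast]; exact h1
      have hb := abs_le.1 h2
      rw [Finset.mem_Icc]
      constructor
      · rw [neg_le, hMZ, Int.le_floor, Int.cast_neg]
        linarith [hb.1]
      · rw [hMZ, Int.le_floor]
        exact hb.2
    have hinj : Set.InjOn (fun k => bZ k x) ↑K := by
      intro k hk0 l hl0 hkl0
      have hk : k ∈ Finset.range N ∧ T^[k] x ∈ D := by
        have := Finset.mem_coe.1 hk0
        rw [hKdef, Finset.mem_filter] at this
        exact this
      have hl : l ∈ Finset.range N ∧ T^[l] x ∈ D := by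
        have := Finset.mem_coe.1 hl0
        rw [hKdef, Finset.mem_filter] at this
        exact this
      have hkl : bZ k x = bZ l x := hkl0
      rcases lt_trichotomy k l with hlt | heq | hgt
      · exfalso
        have h1 : bZ l x = bZ k x + bZ (l - k) (T^[k] x) := by
          have h0 := hbZadd k (l - k) x
          rw [show k + (l - k) = l by omega] at h0
          exact h0
        have h2 : bZ (l - k) (T^[k] x) = 0 := by
          rw [hkl] at h1; omega
        have h3 : T^[l - k] (T^[k] x) = T^[l] x := by
          rw [← Function.iterate_add_apply]
          congr 1
          omega
        refine hDprop (T^[k] x) hk.2 (l - k) (by omega) ?_ h2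
        rw [h3]
        exact hDB hl.2
      · exact heq
      · exfalso
        have h1 : bZ k x = bZ l x + bZ (k - l) (T^[l] x) := by
          have h0 := hbZadd l (k - l) x
          rw [show l + (k - l) = k by omega] at h0
          exact h0
        have h2 : bZ (k - l) (T^[l] x) = 0 := by
          rw [hkl] at h1; omega
        have h3 : T^[k - l] (T^[l] x) = T^[k] x := by
          rw [← Function.iterate_add_apply]
          congr 1
          omega
        refine hDprop (T^[l] x) hl.2 (k - l) (by omega) ?_ h2
        rw [h3]
        exact hDB hk.2
    have hcard : K.card ≤ (Finset.Icc (-MZ) MZ).card :=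
      Finset.card_le_card_of_injOn _ hmap hinj
    have hIcc : ((Finset.Icc (-MZ) MZ).card : ℝ) = 2 * (MZ : ℝ) + 1 := by
      have h0 : (Finset.Icc (-MZ) MZ).card = (2 * MZ + 1).toNat := by
        rw [Int.card_Icc]
        congr 1
        ring
      rw [h0]
      have h2 : ((2 * MZ + 1).toNat : ℤ) = 2 * MZ + 1 :=
        Int.toNat_of_nonneg (by omega)
      have h3 : (((2 * MZ + 1).toNat : ℕ) : ℝ) = ((2 * MZ + 1 : ℤ) : ℝ) := by
        exact_mod_cast congrArg (Int.cast : ℤ → ℝ) h2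
      rw [h3]
      push_cast
      ring
    calc (K.card : ℝ) ≤ ((Finset.Icc (-MZ) MZ).card : ℝ) := by exact_mod_cast hcard
      _ = 2 * (MZ : ℝ) + 1 := hIcc
      _ ≤ 2 * Φ x + 1 := by
          have := Int.floor_le (Φ x)
          linarith
  -- integrate
  have hVi : Integrable (fun x => ∑ k ∈ Finset.range N, if T^[k] x ∈ D then (1:ℝ) else 0) μ := by
    refine integrable_finset_sum _ fun k _ => ?_
    have h1 : (fun x => if T^[k] x ∈ D then (1:ℝ) else 0)
        = Set.indicator (T^[k] ⁻¹' D) (fun _ => (1:ℝ)) := by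
      funext x
      by_cases hx : T^[k] x ∈ D <;>
        simp [Set.indicator_apply, Set.mem_preimage, hx]
    rw [h1]
    exact (integrable_const (1:ℝ)).indicator ((hMP.measurable.iterate k) hDm)
  have hVint : ∫ x, (∑ k ∈ Finset.range N, if T^[k] x ∈ D then (1:ℝ) else 0) ∂μ
      = N * δ := by
    rw [integral_finset_sum]
    · have h1 : ∀ k ∈ Finset.range N,
          ∫ x, (if T^[k] x ∈ D then (1:ℝ) else 0) ∂μ = δ := by
        intro k _
        have h2 : (fun x => if T^[k] x ∈ D then (1:ℝ) else 0)
            = Set.indicator (T^[k] ⁻¹' D) (fun _ => (1:ℝ)) := by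
          funext x
          by_cases hx : T^[k] x ∈ D <;>
            simp [Set.indicator_apply, Set.mem_preimage, hx]
        rw [h2, integral_indicator_const (1:ℝ) ((hMP.measurable.iterate k) hDm),
          measureReal_def, (hMP.iterate k).measure_preimage hDm.nullMeasurableSet]
        simp [hδdef]
      rw [Finset.sum_congr rfl h1, Finset.sum_const, Finset.card_range, nsmul_eq_mul]
    · intro k _
      have h1 : (fun x => if T^[k] x ∈ D then (1:ℝ) else 0)
          = Set.indicator (T^[k] ⁻¹' D) (fun _ => (1:ℝ)) := by
        funext x
        by_cases hx : T^[k] x ∈ D <;>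
          simp [Set.indicator_apply, Set.mem_preimage, hx]
      rw [h1]
      exact (integrable_const (1:ℝ)).indicator ((hMP.measurable.iterate k) hDm)
  have hcompj : ∀ j : ℕ, Integrable (fun x => |bR m (T^[m * j] x)|) μ := fun j =>
    ka_integrable_comp (hMP.iterate (m * j)) (hbRi m).abs
  have hcompq : ∀ q : ℕ, Integrable (fun x => max (W (T^[m * q] x) - M') 0) μ := fun q =>
    ka_integrable_comp (hMP.iterate (m * q)) hWtail
  have hIj : Integrable (fun x => ∑ j ∈ Finset.range Q, |bR m (T^[m * j] x)|) μ :=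
    integrable_finset_sum _ fun j _ => hcompj j
  have hIq : Integrable (fun x => ∑ q ∈ Finset.range Q, max (W (T^[m * q] x) - M') 0) μ :=
    integrable_finset_sum _ fun q _ => hcompq q
  have hΦint : ∫ x, Φ x ∂μ ≤ Q * ((δ / 8) * m) + M' + Q * ((δ / 8) * m) := by
    have h1 : ∫ x, Φ x ∂μ
        = (∫ x, ∑ j ∈ Finset.range Q, |bR m (T^[m * j] x)| ∂μ) + (M' : ℝ)
          + ∫ x, ∑ q ∈ Finset.range Q, max (W (T^[m * q] x) - M') 0 ∂μ := by
      simp only [hΦdef]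
      have hIjc : Integrable
          (fun x => (∑ j ∈ Finset.range Q, |bR m (T^[m * j] x)|) + (M' : ℝ)) μ :=
        hIj.add (integrable_const _)
      rw [integral_add hIjc hIq, integral_add hIj (integrable_const _)]
      simp
    rw [h1]
    have h2 : ∫ x, ∑ j ∈ Finset.range Q, |bR m (T^[m * j] x)| ∂μ ≤ Q * ((δ / 8) * m) := by
      rw [integral_finset_sum _ (fun j _ => hcompj j)]
      have h3 : ∀ j ∈ Finset.range Q, ∫ x, |bR m (T^[m * j] x)| ∂μ ≤ (δ / 8) * m := by
        intro j _
        have he : ∫ x, |bR m (T^[m * j] x)| ∂μ = ∫ x, |bR m x| ∂μ :=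
          ka_integral_comp (hMP.iterate (m * j)) (hbRi m).abs.aestronglyMeasurable
        rw [he]
        exact hSm
      calc ∑ j ∈ Finset.range Q, ∫ x, |bR m (T^[m * j] x)| ∂μ
          ≤ ∑ _j ∈ Finset.range Q, ((δ / 8) * m) := Finset.sum_le_sum h3
        _ = Q * ((δ / 8) * m) := by
            rw [Finset.sum_const, Finset.card_range, nsmul_eq_mul]
    have h4 : ∫ x, ∑ q ∈ Finset.range Q, max (W (T^[m * q] x) - M') 0 ∂μ
        ≤ Q * ((δ / 8) * m) := by
      rw [integral_finset_sum _ (fun q _ => hcompq q)]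
      have h5 : ∀ q ∈ Finset.range Q,
          ∫ x, max (W (T^[m * q] x) - M') 0 ∂μ ≤ (δ / 8) * m := by
        intro q _
        have he : ∫ x, max (W (T^[m * q] x) - M') 0 ∂μ = ∫ x, max (W x - M') 0 ∂μ :=
          ka_integral_comp (hMP.iterate (m * q)) hWtail.aestronglyMeasurable
        rw [he]
        exact le_of_lt hM'
      calc ∑ q ∈ Finset.range Q, ∫ x, max (W (T^[m * q] x) - M') 0 ∂μ
          ≤ ∑ _q ∈ Finset.range Q, ((δ / 8) * m) := Finset.sum_le_sum h5
        _ = Q * ((δ / 8) * m) := by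
            rw [Finset.sum_const, Finset.card_range, nsmul_eq_mul]
    linarith
  have hmono : N * δ ≤ 2 * (∫ x, Φ x ∂μ) + 1 := by
    rw [← hVint]
    have h1 : ∫ x, (∑ k ∈ Finset.range N, if T^[k] x ∈ D then (1:ℝ) else 0) ∂μ
        ≤ ∫ x, (2 * Φ x + 1) ∂μ := by
      refine integral_mono hVi ?_ hVle
      exact ((hΦi.const_mul 2).add (integrable_const 1))
    have h2 : ∫ x, (2 * Φ x + 1) ∂μ = 2 * (∫ x, Φ x ∂μ) + 1 := by
      rw [integral_add (hΦi.const_mul 2) (integrable_const 1), integral_const_mul]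
      simp
    linarith
  -- final numeric contradiction
  have hQm : (Q : ℝ) * m ≤ N + m := by
    have h1 : (N / m) * m ≤ N := Nat.div_mul_le_self N m
    have h2 : Q * m = (N / m) * m + m := by
      rw [hQdef, Nat.succ_mul]
    have h3 : (Q * m : ℕ) ≤ N + m := by omega
    exact_mod_cast h3
  have hδ2 : (0:ℝ) < δ / 2 := by linarith
  have e1 : (N : ℝ) * δ ≤ ((Q : ℝ) * m) * (δ / 2) + 2 * M' + 1 := by nlinarith [hmono, hΦint]
  have e2 : ((Q : ℝ) * m) * (δ / 2) ≤ ((N : ℝ) + m) * (δ / 2) :=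
    mul_le_mul_of_nonneg_right hQm (le_of_lt hδ2)
  have e3 : (N : ℝ) * (δ / 2) ≤ (m : ℝ) * (δ / 2) + 2 * M' + 1 := by nlinarith
  have e4 : ((4 * (M' : ℝ) + 2) / (δ / 2)) * (δ / 2) = 4 * M' + 2 :=
    div_mul_cancel₀ _ (ne_of_gt hδ2)
  have e5 : ((m : ℝ) + (4 * M' + 2) / (δ / 2)) * (δ / 2) < (N : ℝ) * (δ / 2) :=
    mul_lt_mul_of_pos_right hN hδ2
  nlinarith [e3, e4, e5]
end

section
/- Let (X, μ) be a probability space, S an invertible measure-preserving transformation of (X, μ), and f : X → ℤ a measurable function such that for every ε > 0, μ({x : |∑_{i=0}^{n-1} f(S^i x)| > ε n}) → 0 as n → ∞. Then for μ-almost every x ∈ X there exist infinitely many positive integers n with ∑_{i=0}^{n-1} f(S^i x) = 0. -/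
open MeasureTheory Filter Topology ENNReal

set_option linter.unusedSectionVars false

namespace WeissAux

variable {X : Type*} [MeasurableSpace X]

/-- The Birkhoff sums of `f` along `S`. -/
def bsum (S : X → X) (f : X → ℤ) (n : ℕ) (x : X) : ℤ :=
  ∑ i ∈ Finset.range n, f (S^[i] x)

lemma bsum_add (S : X → X) (f : X → ℤ) (m d : ℕ) (x : X) :
    bsum S f (m + d) x = bsum S f m x + bsum S f d (S^[m] x) := by
  unfold bsum
  rw [Finset.sum_range_add]
  congr 1
  refine Finset.sum_congr rfl fun i _ => ?_
  rw [add_comm m i, Function.iterate_add_apply]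

lemma measurable_bsum {S : X → X} (hS : Measurable S) {f : X → ℤ} (hf : Measurable f)
    (n : ℕ) : Measurable (bsum S f n) :=
  Finset.measurable_sum _ fun i _ => hf.comp (hS.iterate i)

/-- The set of points whose Birkhoff sums never return to `0`. -/
def Bset (S : X → X) (f : X → ℤ) : Set X := {y | ∀ d, 1 ≤ d → bsum S f d y ≠ 0}

lemma measurableSet_Bset {S : X → X} (hS : Measurable S) {f : X → ℤ} (hf : Measurable f) :
    MeasurableSet (Bset S f) := by
  have h : Bset S f = ⋂ d, ⋂ _ : 1 ≤ d, (bsum S f d) ⁻¹' ({0}ᶜ) := by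
    ext y; simp [Bset]
  rw [h]
  exact MeasurableSet.iInter fun d => MeasurableSet.iInter fun _ =>
    (measurable_bsum hS hf d) (measurableSet_singleton 0).compl

lemma nat_contra {M n p q s r : ℕ} (hM : 4 * M ≤ n) (h1 : n < 2 * p)
    (h2 : 8 * q < n) (h3 : p ≤ s + q) (h4 : s ≤ 2 * r + M) (h5 : 16 * r ≤ n) :
    False := by omega

lemma Bset_null (μ : Measure X) [IsProbabilityMeasure μ] (S : X ≃ᵐ X)
    (hS : MeasurePreserving (⇑S) μ μ) (f : X → ℤ) (hf : Measurable f)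
    (hweiss : ∀ ε : ℝ, 0 < ε →
      Tendsto (fun n : ℕ =>
          μ {x | ε * n < |∑ i ∈ Finset.range n, (f ((⇑S)^[i] x) : ℝ)|})
        atTop (𝓝 (0 : ℝ≥0∞))) :
    μ (Bset (⇑S) f) = 0 := by
  classical
  set B := Bset (⇑S) f with hBdef
  have hBm : MeasurableSet B := measurableSet_Bset S.measurable hf
  by_contra hB0
  -- choose M with 1/M < μ B and 1 ≤ M
  obtain ⟨M₀, hM₀⟩ := ENNReal.exists_inv_nat_lt hB0
  set M : ℕ := M₀ + 1 with hMdef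
  have hM1 : 1 ≤ M := Nat.le_add_left 1 M₀
  have hM : ((M : ℝ≥0∞))⁻¹ < μ B := by
    refine lt_of_le_of_lt ?_ hM₀
    exact ENNReal.inv_le_inv.mpr (by exact_mod_cast Nat.le_succ M₀)
  clear_value M
  clear hM₀ hMdef
  -- the small real slope
  set ε : ℝ := (16 * (M : ℝ))⁻¹ with hεdef
  have hε : 0 < ε := by
    rw [hεdef]; positivity
  -- the small ENNReal threshold
  set η : ℝ≥0∞ := (((64 * M ^ 2 : ℕ) : ℝ≥0∞))⁻¹ with hηdef
  have hη : 0 < η := by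
    rw [hηdef]; exact ENNReal.inv_pos.mpr (ENNReal.natCast_ne_top _)
  -- choose m beyond which the Weiss sets are small
  obtain ⟨m, hm⟩ := Filter.eventually_atTop.mp ((hweiss ε hε).eventually_lt_const hη)
  -- the time horizon
  set n : ℕ := 64 * M ^ 2 * m + 4 * M with hndef
  have hn4M : 4 * M ≤ n := Nat.le_add_left _ _
  have hnmM : 64 * M ^ 2 * m ≤ n := Nat.le_add_right _ _
  have hn0 : 0 < n := by omega
  have hnm : m ≤ n := by
    have : m ≤ 64 * M ^ 2 * m := Nat.le_mul_of_pos_left m (by positivity)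
    omega
  clear_value n
  clear hndef
  have hnn : (n : ℝ≥0∞) ≠ ∞ := ENNReal.natCast_ne_top n
  have hnz : (n : ℝ≥0∞) ≠ 0 := by exact_mod_cast hn0.ne'
  -- counting functions
  set cnt : X → ℕ := fun x => ((Finset.range n).filter fun j => (⇑S)^[j] x ∈ B).card with hcntdef
  set bad : X → ℕ := fun x =>
    ((Finset.range n).filter fun j => ε * n < |((bsum (⇑S) f j x : ℤ) : ℝ)|).card with hbaddef
  have hcnt_meas : Measurable cnt := by
    rw [hcntdef]
    simp only [Finset.card_filter]
    exact Finset.measurable_sum _ fun j _ =>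
      Measurable.ite ((S.measurable.iterate j) hBm) measurable_const measurable_const
  have hbad_meas : Measurable bad := by
    rw [hbaddef]
    simp only [Finset.card_filter]
    refine Finset.measurable_sum _ fun j _ =>
      Measurable.ite ?_ measurable_const measurable_const
    have hmb : Measurable fun x => ((bsum (⇑S) f j x : ℤ) : ℝ) :=
      (measurable_of_countable _).comp (measurable_bsum S.measurable hf j)
    exact measurableSet_lt measurable_const hmb.abs
  have hcnt_le : ∀ x, cnt x ≤ n := fun x =>
    le_trans (Finset.card_filter_le _ _) (by simp)
  have hcnt_int : ∫⁻ x, (cnt x : ℝ≥0∞) ∂μ = n * μ B := by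
    have hrw : ∀ x, ((cnt x : ℕ) : ℝ≥0∞)
        = ∑ j ∈ Finset.range n, Set.indicator ((⇑S)^[j] ⁻¹' B) (fun _ => (1:ℝ≥0∞)) x := by
      intro x
      rw [hcntdef]
      simp only [Finset.card_filter, Nat.cast_sum]
      refine Finset.sum_congr rfl fun j _ => ?_
      by_cases h : (⇑S)^[j] x ∈ B <;>
        simp [Set.indicator_apply, Set.mem_preimage, h]
    simp only [hrw]
    rw [lintegral_finset_sum _ (fun j _ =>
      measurable_const.indicator ((S.measurable.iterate j) hBm))]
    have heach : ∀ j ∈ Finset.range n,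
        (∫⁻ x, Set.indicator ((⇑S)^[j] ⁻¹' B) (fun _ => (1:ℝ≥0∞)) x ∂μ) = μ B := by
      intro j _
      rw [lintegral_indicator_const ((S.measurable.iterate j) hBm), one_mul,
        (hS.iterate j).measure_preimage hBm.nullMeasurableSet]
    rw [Finset.sum_congr rfl heach, Finset.sum_const, Finset.card_range, nsmul_eq_mul]
  -- the set where the orbit visits B often
  set A : Set X := {x | n < 2 * M * cnt x} with hAdef
  have hA_meas : MeasurableSet A := by
    rw [hAdef]
    exact hcnt_meas (Set.to_countable {k : ℕ | n < 2 * M * k}).measurableSet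
  have hMM : ((M : ℝ≥0∞)) ≠ 0 := by exact_mod_cast (by omega : M ≠ 0)
  have hMt : ((M : ℝ≥0∞)) ≠ ∞ := ENNReal.natCast_ne_top M
  -- pointwise bound giving reverse Markov
  have hptA : ∀ x, ((2 * M * cnt x : ℕ) : ℝ≥0∞)
      ≤ A.indicator (fun _ => ((2 * M * n : ℕ) : ℝ≥0∞)) x + n := by
    intro x
    by_cases h : x ∈ A
    · rw [Set.indicator_of_mem h]
      have : (2 * M * cnt x : ℕ) ≤ 2 * M * n := by
        have := hcnt_le x; exact Nat.mul_le_mul_left _ this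
      exact le_trans (by exact_mod_cast this) le_self_add
    · rw [Set.indicator_of_notMem h, zero_add]
      have hx : 2 * M * cnt x ≤ n := not_lt.mp h
      exact_mod_cast hx
  have key1 : ((2 * M : ℕ) : ℝ≥0∞) * ((n : ℝ≥0∞) * μ B)
      ≤ ((2 * M * n : ℕ) : ℝ≥0∞) * μ A + n := by
    have h1 : ((2 * M : ℕ) : ℝ≥0∞) * ((n : ℝ≥0∞) * μ B)
        = ∫⁻ x, ((2 * M * cnt x : ℕ) : ℝ≥0∞) ∂μ := by
      have hcm : Measurable fun x => ((cnt x : ℕ) : ℝ≥0∞) :=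
        measurable_from_nat.comp hcnt_meas
      rw [← hcnt_int, ← lintegral_const_mul _ hcm]
      refine lintegral_congr fun x => ?_
      push_cast; ring
    have h2 : (∫⁻ x, (A.indicator (fun _ => ((2 * M * n : ℕ) : ℝ≥0∞)) x + n) ∂μ)
        = ((2 * M * n : ℕ) : ℝ≥0∞) * μ A + n := by
      rw [lintegral_add_right _ measurable_const, lintegral_const,
        lintegral_indicator_const hA_meas, measure_univ, mul_one]
    rw [h1, ← h2]
    exact lintegral_mono hptA
  -- deduce μ A > (2M)⁻¹
  have hμA : ((2 * M : ℕ) : ℝ≥0∞)⁻¹ < μ A := by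
    have h2Mn0 : ((2 * M * n : ℕ) : ℝ≥0∞) ≠ 0 := by
      exact_mod_cast (by positivity : 2 * M * n ≠ 0)
    have h2Mnt : ((2 * M * n : ℕ) : ℝ≥0∞) ≠ ∞ := ENNReal.natCast_ne_top _
    have hlt : (n : ℝ≥0∞) + n < ((2 * M * n : ℕ) : ℝ≥0∞) * μ A + n := by
      refine lt_of_lt_of_le ?_ key1
      have : ((2 * M * n : ℕ) : ℝ≥0∞) * ((M : ℝ≥0∞))⁻¹ = (n : ℝ≥0∞) + n := by
        push_cast
        rw [show ((2 : ℝ≥0∞) * M * n) * (M : ℝ≥0∞)⁻¹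
            = ((M : ℝ≥0∞) * (M : ℝ≥0∞)⁻¹) * (2 * n) by ring,
          ENNReal.mul_inv_cancel hMM hMt, one_mul, two_mul]
      calc (n : ℝ≥0∞) + n = ((2 * M * n : ℕ) : ℝ≥0∞) * ((M : ℝ≥0∞))⁻¹ := this.symm
        _ < ((2 * M * n : ℕ) : ℝ≥0∞) * μ B :=
            (ENNReal.mul_lt_mul_iff_right h2Mn0 h2Mnt).mpr hM
        _ = ((2 * M : ℕ) : ℝ≥0∞) * ((n : ℝ≥0∞) * μ B) := by push_cast; ring
    have hlt2 : (n : ℝ≥0∞) < ((2 * M * n : ℕ) : ℝ≥0∞) * μ A :=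
      (ENNReal.add_lt_add_iff_right hnn).mp hlt
    by_contra hcon
    push_neg at hcon
    have : ((2 * M * n : ℕ) : ℝ≥0∞) * μ A ≤ (n : ℝ≥0∞) := by
      calc ((2 * M * n : ℕ) : ℝ≥0∞) * μ A
          ≤ ((2 * M * n : ℕ) : ℝ≥0∞) * ((2 * M : ℕ) : ℝ≥0∞)⁻¹ := by
            exact mul_le_mul_right hcon _
        _ = (n : ℝ≥0∞) := by
            push_cast
            rw [show ((2 : ℝ≥0∞) * M * n) * ((2 : ℝ≥0∞) * M)⁻¹
              = (((2 : ℝ≥0∞) * M) * ((2 : ℝ≥0∞) * M)⁻¹) * n by ring,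
              ENNReal.mul_inv_cancel (by exact_mod_cast (by omega : 2 * M ≠ 0))
                (by exact_mod_cast ENNReal.natCast_ne_top (2 * M)), one_mul]
    exact absurd hlt2 (not_lt.mpr this)
  -- the bad set where many Birkhoff sums are large
  set Bad : Set X := {x | n ≤ 8 * M * bad x} with hBaddef
  have hBad_meas : MeasurableSet Bad := by
    rw [hBaddef]
    exact hbad_meas (Set.to_countable {k : ℕ | n ≤ 8 * M * k}).measurableSet
  -- each "large sum" set
  have hT_meas : ∀ j : ℕ,
      MeasurableSet {x | ε * n < |((bsum (⇑S) f j x : ℤ) : ℝ)|} := by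
    intro j
    have hmb : Measurable fun x => ((bsum (⇑S) f j x : ℤ) : ℝ) :=
      (measurable_of_countable _).comp (measurable_bsum S.measurable hf j)
    exact measurableSet_lt measurable_const hmb.abs
  have hT_small : ∀ j, j ≤ n →
      μ {x | ε * n < |((bsum (⇑S) f j x : ℤ) : ℝ)|}
        ≤ if j < m then 1 else η := by
    intro j hj
    by_cases hjm : j < m
    · simp only [hjm, if_true]
      exact prob_le_one
    · simp only [hjm, if_false]
      refine le_of_lt (lt_of_le_of_lt (measure_mono ?_) (hm j (not_lt.mp hjm)))
      intro x hx
      simp only [Set.mem_setOf_eq] at hx ⊢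
      have hcast : ((bsum (⇑S) f j x : ℤ) : ℝ)
          = ∑ i ∈ Finset.range j, (f ((⇑S)^[i] x) : ℝ) := by
        simp [bsum]
      rw [← hcast]
      refine lt_of_le_of_lt ?_ hx
      have : (j : ℝ) ≤ (n : ℝ) := by exact_mod_cast hj
      nlinarith [hε.le]
  have hbad_int : ∫⁻ x, (bad x : ℝ≥0∞) ∂μ ≤ (m : ℝ≥0∞) + n * η := by
    have hrw : ∀ x, ((bad x : ℕ) : ℝ≥0∞)
        = ∑ j ∈ Finset.range n,
          Set.indicator {x | ε * n < |((bsum (⇑S) f j x : ℤ) : ℝ)|}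
            (fun _ => (1:ℝ≥0∞)) x := by
      intro x
      rw [hbaddef]
      simp only [Finset.card_filter, Nat.cast_sum]
      refine Finset.sum_congr rfl fun j _ => ?_
      by_cases h : ε * n < |((bsum (⇑S) f j x : ℤ) : ℝ)| <;>
        simp [Set.indicator_apply, Set.mem_setOf_eq, h]
    simp only [hrw]
    rw [lintegral_finset_sum _ (fun j _ => measurable_const.indicator (hT_meas j))]
    have heach : ∀ j ∈ Finset.range n,
        (∫⁻ x, Set.indicator {x | ε * n < |((bsum (⇑S) f j x : ℤ) : ℝ)|}
          (fun _ => (1:ℝ≥0∞)) x ∂μ) ≤ if j < m then 1 else η := by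
      intro j hj
      rw [lintegral_indicator_const (hT_meas j), one_mul]
      exact hT_small j (Finset.mem_range.mp hj).le
    refine le_trans (Finset.sum_le_sum heach) ?_
    have hsplit : ∀ j ∈ Finset.range n,
        (if j < m then (1:ℝ≥0∞) else η) ≤ (if j < m then (1:ℝ≥0∞) else 0) + η := by
      intro j _
      by_cases h : j < m <;> simp [h]
    refine le_trans (Finset.sum_le_sum hsplit) ?_
    rw [Finset.sum_add_distrib, Finset.sum_const, Finset.card_range, nsmul_eq_mul]
    have : ∑ j ∈ Finset.range n, (if j < m then (1:ℝ≥0∞) else 0) = m := by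
      rw [← Finset.sum_filter]
      have hfil : (Finset.range n).filter (fun j => j < m) = Finset.range m := by
        ext j
        simp only [Finset.mem_filter, Finset.mem_range]
        omega
      rw [hfil]
      simp
    rw [this]
  -- reverse Markov for Bad
  have h8M0 : ((8 * M : ℕ) : ℝ≥0∞) ≠ 0 := by exact_mod_cast (by omega : 8 * M ≠ 0)
  have h8Mt : ((8 * M : ℕ) : ℝ≥0∞) ≠ ∞ := ENNReal.natCast_ne_top _
  have key2 : (n : ℝ≥0∞) * μ Bad ≤ ((8 * M : ℕ) : ℝ≥0∞) * ((m : ℝ≥0∞) + n * η) := by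
    have h1 : (n : ℝ≥0∞) * μ Bad
        = ∫⁻ x, Bad.indicator (fun _ => (n : ℝ≥0∞)) x ∂μ := by
      rw [lintegral_indicator_const hBad_meas]
    have h2 : (∫⁻ x, Bad.indicator (fun _ => (n : ℝ≥0∞)) x ∂μ)
        ≤ ∫⁻ x, ((8 * M : ℕ) : ℝ≥0∞) * (bad x : ℝ≥0∞) ∂μ := by
      refine lintegral_mono fun x => ?_
      by_cases h : x ∈ Bad
      · rw [Set.indicator_of_mem h]
        have hx : n ≤ 8 * M * bad x := h
        calc (n : ℝ≥0∞) ≤ ((8 * M * bad x : ℕ) : ℝ≥0∞) := by exact_mod_cast hx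
          _ = ((8 * M : ℕ) : ℝ≥0∞) * (bad x : ℝ≥0∞) := by push_cast; ring
      · rw [Set.indicator_of_notMem h]
        exact zero_le
    have h3 : (∫⁻ x, ((8 * M : ℕ) : ℝ≥0∞) * (bad x : ℝ≥0∞) ∂μ)
        = ((8 * M : ℕ) : ℝ≥0∞) * ∫⁻ x, (bad x : ℝ≥0∞) ∂μ := by
      have hbm : Measurable fun x => ((bad x : ℕ) : ℝ≥0∞) :=
        measurable_from_nat.comp hbad_meas
      rw [lintegral_const_mul _ hbm]
    calc (n : ℝ≥0∞) * μ Bad = _ := h1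
      _ ≤ _ := h2
      _ = _ := h3
      _ ≤ ((8 * M : ℕ) : ℝ≥0∞) * ((m : ℝ≥0∞) + n * η) :=
          mul_le_mul_right hbad_int _
  -- simplify: μ Bad ≤ (4M)⁻¹
  have hη8M : ((8 * M : ℕ) : ℝ≥0∞) * η = ((8 * M : ℕ) : ℝ≥0∞)⁻¹ := by
    have h64 : ((64 * M ^ 2 : ℕ) : ℝ≥0∞) = ((8 * M : ℕ) : ℝ≥0∞) * ((8 * M : ℕ) : ℝ≥0∞) := by
      push_cast; ring
    rw [hηdef, h64, ENNReal.mul_inv (Or.inl h8M0) (Or.inl h8Mt),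
      ← mul_assoc, ENNReal.mul_inv_cancel h8M0 h8Mt, one_mul]
  have hμBad : μ Bad ≤ ((4 * M : ℕ) : ℝ≥0∞)⁻¹ := by
    have hstep : ((8 * M : ℕ) : ℝ≥0∞) * ((m : ℝ≥0∞) + n * η)
        ≤ (n : ℝ≥0∞) * ((4 * M : ℕ) : ℝ≥0∞)⁻¹ := by
      have e1 : ((8 * M : ℕ) : ℝ≥0∞) * ((m : ℝ≥0∞) + n * η)
          = ((8 * M : ℕ) : ℝ≥0∞) * m + (n : ℝ≥0∞) * (((8 * M : ℕ) : ℝ≥0∞) * η) := by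
        ring
      have e2 : ((8 * M : ℕ) : ℝ≥0∞) * m ≤ (n : ℝ≥0∞) * ((8 * M : ℕ) : ℝ≥0∞)⁻¹ := by
        have : ((64 * M ^ 2 * m : ℕ) : ℝ≥0∞) ≤ (n : ℝ≥0∞) := by exact_mod_cast hnmM
        calc ((8 * M : ℕ) : ℝ≥0∞) * m
            = ((64 * M ^ 2 * m : ℕ) : ℝ≥0∞) * ((8 * M : ℕ) : ℝ≥0∞)⁻¹ := by
              push_cast
              rw [show ((64:ℝ≥0∞) * ↑M ^ 2 * ↑m) * ((8:ℝ≥0∞) * ↑M)⁻¹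
                = (((8:ℝ≥0∞) * ↑M) * ((8:ℝ≥0∞) * ↑M)⁻¹) * (8 * ↑M * ↑m) by ring,
                ENNReal.mul_inv_cancel (by exact_mod_cast (by omega : 8 * M ≠ 0))
                  (by exact_mod_cast ENNReal.natCast_ne_top (8 * M))]
              ring
          _ ≤ (n : ℝ≥0∞) * ((8 * M : ℕ) : ℝ≥0∞)⁻¹ := mul_le_mul_left this _
      have e3 : (n : ℝ≥0∞) * ((8 * M : ℕ) : ℝ≥0∞)⁻¹ + (n : ℝ≥0∞) * ((8 * M : ℕ) : ℝ≥0∞)⁻¹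
          = (n : ℝ≥0∞) * ((4 * M : ℕ) : ℝ≥0∞)⁻¹ := by
        have h8 : ((8 * M : ℕ) : ℝ≥0∞) = 2 * ((4 * M : ℕ) : ℝ≥0∞) := by push_cast; ring
        rw [h8, ENNReal.mul_inv (Or.inl (by norm_num)) (Or.inl (by norm_num))]
        rw [show ((n : ℝ≥0∞) * (2⁻¹ * (↑(4 * M) : ℝ≥0∞)⁻¹) + (n : ℝ≥0∞) * (2⁻¹ * (↑(4 * M) : ℝ≥0∞)⁻¹))
          = (2 * 2⁻¹) * ((n : ℝ≥0∞) * (↑(4 * M) : ℝ≥0∞)⁻¹) by ring,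
          ENNReal.mul_inv_cancel (by norm_num) (by norm_num), one_mul]
      calc ((8 * M : ℕ) : ℝ≥0∞) * ((m : ℝ≥0∞) + n * η)
          = ((8 * M : ℕ) : ℝ≥0∞) * m + (n : ℝ≥0∞) * (((8 * M : ℕ) : ℝ≥0∞) * η) := e1
        _ = ((8 * M : ℕ) : ℝ≥0∞) * m + (n : ℝ≥0∞) * ((8 * M : ℕ) : ℝ≥0∞)⁻¹ := by rw [hη8M]
        _ ≤ (n : ℝ≥0∞) * ((8 * M : ℕ) : ℝ≥0∞)⁻¹ + (n : ℝ≥0∞) * ((8 * M : ℕ) : ℝ≥0∞)⁻¹ :=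
            add_le_add_left e2 _
        _ = (n : ℝ≥0∞) * ((4 * M : ℕ) : ℝ≥0∞)⁻¹ := e3
    have := le_trans key2 hstep
    exact (ENNReal.mul_le_mul_iff_right hnz hnn).mp this
  -- hence μ Bad < μ A, so there is a point in A \ Bad
  have hBadA : μ Bad < μ A := by
    refine lt_of_le_of_lt hμBad (lt_trans ?_ hμA)
    rw [ENNReal.inv_lt_inv]
    exact_mod_cast (by omega : 2 * M < 4 * M)
  obtain ⟨x, hxA, hxBad⟩ : ∃ x, x ∈ A ∧ x ∉ Bad := by
    rw [← Set.not_subset]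
    intro hsub
    exact absurd (measure_mono hsub) (not_le.mpr hBadA)
  -- combinatorial contradiction at x
  have hxA' : n < 2 * M * cnt x := hxA
  have hxBad' : 8 * M * bad x < n := not_le.mp hxBad
  set c : ℕ := n / (16 * M) with hcdef
  set g : Finset ℕ := (Finset.range n).filter
    (fun j => (⇑S)^[j] x ∈ B ∧ ¬(ε * n < |((bsum (⇑S) f j x : ℤ) : ℝ)|)) with hgdef
  have h3 : cnt x ≤ g.card + bad x := by
    have hsub : (Finset.range n).filter (fun j => (⇑S)^[j] x ∈ B)
        ⊆ g ∪ (Finset.range n).filter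
          (fun j => ε * n < |((bsum (⇑S) f j x : ℤ) : ℝ)|) := by
      intro j hj
      rw [Finset.mem_filter] at hj
      rw [Finset.mem_union, hgdef, Finset.mem_filter, Finset.mem_filter]
      by_cases hq : ε * n < |((bsum (⇑S) f j x : ℤ) : ℝ)|
      · exact Or.inr ⟨hj.1, hq⟩
      · exact Or.inl ⟨hj.1, hj.2, hq⟩
    calc cnt x ≤ (g ∪ (Finset.range n).filter
          (fun j => ε * n < |((bsum (⇑S) f j x : ℤ) : ℝ)|)).card :=
        Finset.card_le_card hsub
      _ ≤ g.card + bad x := Finset.card_union_le _ _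
  have hinj : Set.InjOn (fun j => bsum (⇑S) f j x) ↑g := by
    have key : ∀ j k, j ∈ g → k ∈ g → j < k →
        bsum (⇑S) f j x ≠ bsum (⇑S) f k x := by
      intro j k hj hk hjk heq
      rw [hgdef, Finset.mem_filter] at hj
      have hjB : (⇑S)^[j] x ∈ B := hj.2.1
      have hsplit : bsum (⇑S) f k x
          = bsum (⇑S) f j x + bsum (⇑S) f (k - j) ((⇑S)^[j] x) := by
        rw [← bsum_add]
        congr 1
        omega
      have hzero : bsum (⇑S) f (k - j) ((⇑S)^[j] x) = 0 := by omega
      exact hjB (k - j) (by omega) hzero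
    intro j hj k hk heq
    have hj' : j ∈ g := hj
    have hk' : k ∈ g := hk
    rcases lt_trichotomy j k with h | h | h
    · exact absurd heq (key j k hj' hk' h)
    · exact h
    · exact absurd heq.symm (key k j hk' hj' h)
  have himg : ∀ j ∈ g, bsum (⇑S) f j x ∈ Finset.Icc (-(c:ℤ)) (c:ℤ) := by
    intro j hj
    rw [hgdef, Finset.mem_filter] at hj
    have hq : |((bsum (⇑S) f j x : ℤ) : ℝ)| ≤ ε * n := not_lt.mp hj.2.2
    have h16M : (0:ℝ) < 16 * (M:ℝ) := by positivity
    have h1 : |((bsum (⇑S) f j x : ℤ) : ℝ)| * (16 * (M:ℝ)) ≤ n := by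
      calc |((bsum (⇑S) f j x : ℤ) : ℝ)| * (16 * (M:ℝ))
          ≤ (ε * n) * (16 * (M:ℝ)) := mul_le_mul_of_nonneg_right hq h16M.le
        _ = n := by rw [hεdef]; field_simp
    have hcast : (((bsum (⇑S) f j x).natAbs : ℝ)) = |((bsum (⇑S) f j x : ℤ) : ℝ)| := by
      rw [Nat.cast_natAbs, Int.cast_abs]
    have h2 : (bsum (⇑S) f j x).natAbs * (16 * M) ≤ n := by
      have : (((bsum (⇑S) f j x).natAbs : ℝ)) * (16 * (M:ℝ)) ≤ n := by
        rw [hcast]; exact h1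
      exact_mod_cast this
    have h4 : (bsum (⇑S) f j x).natAbs ≤ c := by
      rw [hcdef]
      exact (Nat.le_div_iff_mul_le (by positivity)).mpr h2
    rw [Finset.mem_Icc]
    omega
  have hcard : g.card ≤ 2 * c + 1 := by
    calc g.card = (g.image (fun j => bsum (⇑S) f j x)).card :=
        (Finset.card_image_of_injOn hinj).symm
      _ ≤ (Finset.Icc (-(c:ℤ)) (c:ℤ)).card := by
          refine Finset.card_le_card ?_
          intro y hy
          obtain ⟨j, hj, rfl⟩ := Finset.mem_image.mp hy
          exact himg j hj
      _ = 2 * c + 1 := by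
          rw [Int.card_Icc]
          omega
  have h5 : 16 * (M * c) ≤ n := by
    have h := Nat.div_mul_le_self n (16 * M)
    rw [← hcdef] at h
    calc 16 * (M * c) = c * (16 * M) := by ring
      _ ≤ n := h
  refine nat_contra hn4M (p := M * cnt x) (q := M * bad x) (s := M * g.card)
    (r := M * c) ?_ ?_ ?_ ?_ h5
  · calc n < 2 * M * cnt x := hxA'
      _ = 2 * (M * cnt x) := by ring
  · calc 8 * (M * bad x) = 8 * M * bad x := by ring
      _ < n := hxBad'
  · calc M * cnt x ≤ M * (g.card + bad x) := Nat.mul_le_mul le_rfl h3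
      _ = M * g.card + M * bad x := by ring
  · calc M * g.card ≤ M * (2 * c + 1) := Nat.mul_le_mul le_rfl hcard
      _ = 2 * (M * c) + M := by ring





end WeissAux

/-- **Theorem D (after B. Weiss).** Let `S` be an invertible measure-preserving
transformation of a probability space `(X, μ)` and `f : X → ℤ` measurable such
that `μ {x : |∑_{i<n} f(S^i x)| > ε n} → 0` for every `ε > 0`. Then for almost
every `x` the Birkhoff sums of `f` vanish at infinitely many positive times. -/
theorem weiss_recurrence {X : Type*} [MeasurableSpace X] (μ : Measure X)
    [IsProbabilityMeasure μ] (S : X ≃ᵐ X) (hS : MeasurePreserving (⇑S) μ μ)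
    (f : X → ℤ) (hf : Measurable f)
    (hweiss : ∀ ε : ℝ, 0 < ε →
      Tendsto (fun n : ℕ =>
          μ {x | ε * n < |∑ i ∈ Finset.range n, (f ((⇑S)^[i] x) : ℝ)|})
        atTop (𝓝 (0 : ℝ≥0∞))) :
    ∀ᵐ x ∂μ, ∃ᶠ n in atTop,
      0 < n ∧ ∑ i ∈ Finset.range n, f ((⇑S)^[i] x) = 0 := by
  classical
  have hB := WeissAux.Bset_null μ S hS f hf hweiss
  have hN : μ (⋃ k : ℕ, (⇑S)^[k] ⁻¹' WeissAux.Bset (⇑S) f) = 0 :=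
    measure_iUnion_null fun k => by
      rw [(hS.iterate k).measure_preimage
        (WeissAux.measurableSet_Bset S.measurable hf).nullMeasurableSet]
      exact hB
  rw [ae_iff]
  refine measure_mono_null ?_ hN
  intro x hx
  simp only [Set.mem_setOf_eq] at hx
  rw [Filter.not_frequently] at hx
  obtain ⟨N₀, hN₀⟩ := Filter.eventually_atTop.mp hx
  set P : ℕ → Prop := fun k => 0 < k ∧ WeissAux.bsum (⇑S) f k x = 0 with hPdef
  have hN₀' : ∀ k, N₀ ≤ k → ¬ P k := fun k hk => hN₀ k hk
  by_cases hex : ∃ k, P k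
  · obtain ⟨k, hk⟩ := hex
    have hkN : k ≤ N₀ := by
      by_contra h
      exact hN₀' k (by omega) hk
    set K := Nat.findGreatest P N₀ with hKdef
    have hPK : P K := Nat.findGreatest_spec hkN hk
    have hgt : ∀ d, 1 ≤ d → ¬ P (K + d) := by
      intro d hd
      rcases le_or_gt (K + d) N₀ with h | h
      · exact Nat.findGreatest_is_greatest (by omega) h
      · exact hN₀' (K + d) h.le
    refine Set.mem_iUnion.mpr ⟨K, ?_⟩
    intro d hd heq
    refine hgt d hd ⟨by omega, ?_⟩
    rw [WeissAux.bsum_add, hPK.2, heq, add_zero]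
  · push_neg at hex
    refine Set.mem_iUnion.mpr ⟨0, ?_⟩
    intro d hd heq
    refine hex d ⟨hd, ?_⟩
    simpa using heq
end
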